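/- arXiv:2411.07203 — 4 statements merged into one kernel-verified Lean document; each statement's English description precedes it below -/
import Mathlib

section
/- The function f(γ) = (γ^{−1}−1)^{−γ} − sqrt(1−2γ) has exactly one zero γ* on the open interval (0, 1/2); moreover f(γ) < 0 for 0 < γ < γ* and f(γ) > 0 for γ* < γ < 1/2. -/
open Set Real

noncomputable def Hf (γ : ℝ) : ℝ :=
  γ * Real.log γ - γ * Real.log (1 - γ) - (1/2) * Real.log (1 - 2*γ)

noncomputable def Hf1 (γ : ℝ) : ℝ :=
  Real.log γ - Real.log (1 - γ) + (1 - γ)⁻¹ + (1 - 2*γ)⁻¹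

noncomputable def Hf2 (γ : ℝ) : ℝ :=
  γ⁻¹ + (1 - γ)⁻¹ + ((1-γ)^2)⁻¹ + 2 * ((1-2*γ)^2)⁻¹

lemma hasDerivAt_Hf {x : ℝ} (h1 : 0 < x) (h2 : x < 1/2) :
    HasDerivAt Hf (Hf1 x) x := by
  have ha : (1:ℝ) - x > 0 := by linarith
  have hb : (1:ℝ) - 2*x > 0 := by linarith
  have d1 : HasDerivAt (fun γ : ℝ => γ * Real.log γ) (1 * Real.log x + x * x⁻¹) x :=
    (hasDerivAt_id x).mul (Real.hasDerivAt_log h1.ne')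
  have i2 : HasDerivAt (fun γ : ℝ => 1 - γ) (-1) x := (hasDerivAt_id x).const_sub 1
  have l2 : HasDerivAt (fun γ : ℝ => Real.log (1 - γ)) ((1-x)⁻¹ * -1) x :=
    (Real.hasDerivAt_log ha.ne').comp x i2
  have d2 : HasDerivAt (fun γ : ℝ => γ * Real.log (1 - γ))
      (1 * Real.log (1-x) + x * ((1-x)⁻¹ * -1)) x := (hasDerivAt_id x).mul l2
  have i3 : HasDerivAt (fun γ : ℝ => 1 - 2*γ) (-2) x := by
    simpa using ((hasDerivAt_id x).const_mul 2).const_sub 1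
  have l3 : HasDerivAt (fun γ : ℝ => Real.log (1 - 2*γ)) ((1-2*x)⁻¹ * -2) x :=
    HasDerivAt.comp (h₂ := Real.log) x (Real.hasDerivAt_log hb.ne') i3
  have := (d1.sub d2).sub (l3.const_mul (1/2 : ℝ))
  refine this.congr_deriv ?_
  unfold Hf1; field_simp
  ring

lemma hasDerivAt_Hf1 {x : ℝ} (h1 : 0 < x) (h2 : x < 1/2) :
    HasDerivAt Hf1 (Hf2 x) x := by
  have ha : (1:ℝ) - x > 0 := by linarith
  have hb : (1:ℝ) - 2*x > 0 := by linarith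
  have d1 : HasDerivAt Real.log x⁻¹ x := Real.hasDerivAt_log h1.ne'
  have i2 : HasDerivAt (fun γ : ℝ => 1 - γ) (-1) x := (hasDerivAt_id x).const_sub 1
  have l2 : HasDerivAt (fun γ : ℝ => Real.log (1 - γ)) ((1-x)⁻¹ * -1) x :=
    (Real.hasDerivAt_log ha.ne').comp x i2
  have v2 : HasDerivAt (fun γ : ℝ => (1 - γ)⁻¹) (-(-1) / (1-x)^2) x := i2.inv ha.ne'
  have i3 : HasDerivAt (fun γ : ℝ => 1 - 2*γ) (-2) x := by
    simpa using ((hasDerivAt_id x).const_mul 2).const_sub 1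
  have v3 : HasDerivAt (fun γ : ℝ => (1 - 2*γ)⁻¹) (-(-2) / (1-2*x)^2) x := i3.inv hb.ne'
  have := ((d1.sub l2).add v2).add v3
  refine this.congr_deriv ?_
  unfold Hf2; field_simp
  ring

lemma continuousOn_Hf : ContinuousOn Hf (Ico (0:ℝ) (1/2)) := by
  have c1 : ContinuousOn (fun γ : ℝ => γ * Real.log γ) (Ico (0:ℝ) (1/2)) :=
    Real.continuous_mul_log.continuousOn
  have c2 : ContinuousOn (fun γ : ℝ => γ * Real.log (1 - γ)) (Ico (0:ℝ) (1/2)) := by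
    refine continuousOn_id.mul (ContinuousOn.log ?_ ?_)
    · exact (continuous_const.sub continuous_id).continuousOn
    · intro x hx; simp only [mem_Ico] at hx; intro h; linarith [hx.2]
  have c3 : ContinuousOn (fun γ : ℝ => (1/2 : ℝ) * Real.log (1 - 2*γ)) (Ico (0:ℝ) (1/2)) := by
    refine continuousOn_const.mul (ContinuousOn.log ?_ ?_)
    · exact (continuous_const.sub (continuous_const.mul continuous_id)).continuousOn
    · intro x hx; simp only [mem_Ico] at hx; intro h; linarith [hx.2]
  exact (c1.sub c2).sub c3

lemma strictConvexOn_Hf : StrictConvexOn ℝ (Ico (0:ℝ) (1/2)) Hf := by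
  apply strictConvexOn_of_deriv2_pos (convex_Ico 0 (1/2)) continuousOn_Hf
  intro x hx
  rw [interior_Ico] at hx
  obtain ⟨h1, h2⟩ := hx
  have ha : (1:ℝ) - x > 0 := by linarith
  have hb : (1:ℝ) - 2*x > 0 := by linarith
  have hderiv : deriv Hf =ᶠ[nhds x] Hf1 := by
    filter_upwards [isOpen_Ioo.mem_nhds (show x ∈ Ioo (0:ℝ) (1/2) from ⟨h1, h2⟩)] with y hy
    exact (hasDerivAt_Hf hy.1 hy.2).deriv
  have : deriv^[2] Hf x = Hf2 x := by
    show deriv (deriv Hf) x = Hf2 x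
    rw [hderiv.deriv_eq]
    exact (hasDerivAt_Hf1 h1 h2).deriv
  rw [this]
  unfold Hf2
  positivity

lemma Hf_zero : Hf 0 = 0 := by simp [Hf]

lemma Hf_neg_pt : Hf (1/20) < 0 := by
  have e : Hf (1/20) = -(1/20)*Real.log 19 + (1/2)*(Real.log 10 - Real.log 9) := by
    unfold Hf
    rw [show (1:ℝ) - 1/20 = 19/20 by norm_num, show (1:ℝ) - 2*(1/20) = 9/10 by norm_num,
      show (1/20 : ℝ) = 1/20 by norm_num,
      Real.log_div (by norm_num) (by norm_num),
      Real.log_div (by norm_num : (19:ℝ) ≠ 0) (by norm_num),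
      Real.log_div (by norm_num : (9:ℝ) ≠ 0) (by norm_num), Real.log_one]
    ring
  have h10 : Real.log 10 - Real.log 9 ≤ 1/9 := by
    have h := Real.log_le_sub_one_of_pos (show (0:ℝ) < 10/9 by norm_num)
    rw [Real.log_div (by norm_num) (by norm_num)] at h
    linarith
  have h19 : 4 * Real.log 2 ≤ Real.log 19 := by
    have h := Real.log_le_log (show (0:ℝ) < 16 by norm_num) (show (16:ℝ) ≤ 19 by norm_num)
    rw [show (16:ℝ) = 2^4 by norm_num, Real.log_pow] at h
    push_cast at h
    linarith
  have h2 := Real.log_two_gt_d9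
  rw [e]; nlinarith

lemma Hf_pos_pt : 0 < Hf (49/100) := by
  have e : Hf (49/100) = (49/100)*(Real.log 49 - Real.log 51) + (1/2)*Real.log 50 := by
    unfold Hf
    rw [show (1:ℝ) - 49/100 = 51/100 by norm_num, show (1:ℝ) - 2*(49/100) = 1/50 by norm_num,
      Real.log_div (by norm_num : (49:ℝ) ≠ 0) (by norm_num),
      Real.log_div (by norm_num : (51:ℝ) ≠ 0) (by norm_num),
      Real.log_div (by norm_num) (by norm_num), Real.log_one]
    ring
  have h51 : Real.log 51 - Real.log 49 ≤ 2/49 := by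
    have h := Real.log_le_sub_one_of_pos (show (0:ℝ) < 51/49 by norm_num)
    rw [Real.log_div (by norm_num) (by norm_num)] at h
    linarith
  have h50 : 5 * Real.log 2 ≤ Real.log 50 := by
    have h := Real.log_le_log (show (0:ℝ) < 32 by norm_num) (show (32:ℝ) ≤ 50 by norm_num)
    rw [show (32:ℝ) = 2^5 by norm_num, Real.log_pow] at h
    push_cast at h
    linarith
  have h2 := Real.log_two_gt_d9
  rw [e]; nlinarith

lemma f_eq_exp {γ : ℝ} (h1 : 0 < γ) (h2 : γ < 1/2) :
    (γ⁻¹ - 1) ^ (-γ) - Real.sqrt (1 - 2 * γ)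
      = Real.exp (γ * Real.log γ - γ * Real.log (1 - γ))
        - Real.exp ((1/2) * Real.log (1 - 2*γ)) := by
  have ha : (0:ℝ) < 1 - γ := by linarith
  have hb : (0:ℝ) < 1 - 2*γ := by linarith
  have hbase : γ⁻¹ - 1 = (1 - γ)/γ := by field_simp
  rw [hbase, Real.rpow_def_of_pos (div_pos ha h1),
    Real.log_div ha.ne' h1.ne', Real.sqrt_eq_rpow, Real.rpow_def_of_pos hb]
  ring_nf

lemma sign_f_eq_sign_Hf (f : ℝ → ℝ)
    (hf : ∀ γ : ℝ, f γ = (γ⁻¹ - 1) ^ (-γ) - Real.sqrt (1 - 2 * γ))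
    {γ : ℝ} (h1 : 0 < γ) (h2 : γ < 1/2) :
    (f γ < 0 ↔ Hf γ < 0) ∧ (0 < f γ ↔ 0 < Hf γ) ∧ (f γ = 0 ↔ Hf γ = 0) := by
  have e : f γ = Real.exp (γ * Real.log γ - γ * Real.log (1 - γ))
      - Real.exp ((1/2) * Real.log (1 - 2*γ)) := by rw [hf]; exact f_eq_exp h1 h2
  have hH : Hf γ = (γ * Real.log γ - γ * Real.log (1 - γ)) - (1/2) * Real.log (1 - 2*γ) := by
    unfold Hf; ring
  constructor
  · rw [e, sub_neg, Real.exp_lt_exp, hH]; constructor <;> intro <;> linarith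
  constructor
  · rw [e, sub_pos, Real.exp_lt_exp, hH]; constructor <;> intro <;> linarith
  · rw [e, sub_eq_zero, Real.exp_eq_exp, hH]
    constructor <;> intro <;> linarith

lemma Hf_signs : ∃ γs ∈ Ioo (0:ℝ) (1/2), Hf γs = 0 ∧
    (∀ γ ∈ Ioo (0:ℝ) γs, Hf γ < 0) ∧ (∀ γ ∈ Ioo γs (1/2:ℝ), 0 < Hf γ) := by
  have hsub : Icc (1/20 : ℝ) (49/100) ⊆ Ico (0:ℝ) (1/2) := by
    intro x hx; simp only [mem_Icc, mem_Ico] at *; constructor <;> linarith [hx.1, hx.2]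
  have hivt := intermediate_value_Ioo (show (1/20:ℝ) ≤ 49/100 by norm_num)
    (continuousOn_Hf.mono hsub)
  have h0 : (0:ℝ) ∈ Ioo (Hf (1/20)) (Hf (49/100)) := ⟨Hf_neg_pt, Hf_pos_pt⟩
  obtain ⟨γs, hγs, hz⟩ := hivt h0
  have hs1 : (0:ℝ) < γs := by have := hγs.1; linarith
  have hs2 : γs < 1/2 := by have := hγs.2; linarith
  have hmem : γs ∈ Ico (0:ℝ) (1/2) := ⟨hs1.le, hs2⟩
  have h0mem : (0:ℝ) ∈ Ico (0:ℝ) (1/2) := ⟨le_refl _, by norm_num⟩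
  have neg : ∀ γ ∈ Ioo (0:ℝ) γs, Hf γ < 0 := by
    rintro γ ⟨hg0, hgs⟩
    have ht0 : 0 < γ/γs := div_pos hg0 hs1
    have ht1 : γ/γs < 1 := (div_lt_one hs1).2 hgs
    have key := strictConvexOn_Hf.2 h0mem hmem hs1.ne (show 0 < 1 - γ/γs by linarith) ht0
      (by ring)
    simp only [smul_eq_mul, mul_zero, zero_add, Hf_zero] at key
    have harg : γ/γs * γs = γ := by field_simp
    rw [harg, hz] at key
    linarith
  refine ⟨γs, ⟨hs1, hs2⟩, hz, neg, ?_⟩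
  rintro γ ⟨hgs, hg2⟩
  have hc : γs/2 ∈ Ioo (0:ℝ) γs := ⟨by linarith, by linarith⟩
  have hHc : Hf (γs/2) < 0 := neg _ hc
  set c := γs/2 with hcdef
  have hc0 : 0 < c := by rw [hcdef]; linarith
  have hcs : c < γs := by rw [hcdef]; linarith
  have hcγ : c < γ := by linarith
  have hd : (0:ℝ) < γ - c := by linarith
  set a := (γ - γs)/(γ - c) with hadef
  set b := (γs - c)/(γ - c) with hbdef
  have hapos : 0 < a := div_pos (by linarith) hd
  have hbpos : 0 < b := div_pos (by linarith) hd
  have hcmem : c ∈ Ico (0:ℝ) (1/2) := ⟨by linarith, by linarith⟩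
  have hγmem : γ ∈ Ico (0:ℝ) (1/2) := ⟨by linarith, hg2⟩
  have hsum : a + b = 1 := by rw [hadef, hbdef]; field_simp; ring
  have key := strictConvexOn_Hf.2 hcmem hγmem (ne_of_lt hcγ) hapos hbpos hsum
  have harg : a • c + b • γ = γs := by
    simp only [smul_eq_mul, hadef, hbdef]; field_simp; ring
  rw [harg, hz] at key
  simp only [smul_eq_mul] at key
  by_contra hle
  push_neg at hle
  have h1 : b * Hf γ ≤ 0 := mul_nonpos_of_nonneg_of_nonpos hbpos.le hle
  have h2 : a * Hf c < 0 := mul_neg_of_pos_of_neg hapos hHc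
  linarith

/-- The function `f(γ) = (γ⁻¹−1)^{−γ} − sqrt(1−2γ)` has exactly one zero
`γ*` on `(0, 1/2)`; moreover `f < 0` on `(0, γ*)` and `f > 0` on `(γ*, 1/2)`. -/
theorem unique_zero_of_beta_minus_one
    (f : ℝ → ℝ) (hf : ∀ γ : ℝ, f γ = (γ⁻¹ - 1) ^ (-γ) - Real.sqrt (1 - 2 * γ)) :
    ∃! γs : ℝ, γs ∈ Ioo (0:ℝ) (1/2) ∧ f γs = 0 ∧
      (∀ γ ∈ Ioo (0:ℝ) γs, f γ < 0) ∧
      (∀ γ ∈ Ioo γs (1/2 : ℝ), 0 < f γ) := by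
  obtain ⟨γs, hmem, hz, hneg, hpos⟩ := Hf_signs
  refine ⟨γs, ⟨hmem, ?_, ?_, ?_⟩, ?_⟩
  · exact ((sign_f_eq_sign_Hf f hf hmem.1 hmem.2).2.2).2 hz
  · rintro γ ⟨h1, h2⟩
    exact ((sign_f_eq_sign_Hf f hf h1 (by have := hmem.2; linarith)).1).2 (hneg γ ⟨h1, h2⟩)
  · rintro γ ⟨h1, h2⟩
    exact ((sign_f_eq_sign_Hf f hf (by have := hmem.1; linarith) h2).2.1).2 (hpos γ ⟨h1, h2⟩)
  · rintro y ⟨hymem, hyz, hyneg, hypos⟩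
    rcases lt_trichotomy y γs with h | h | h
    · exfalso
      have : f y < 0 := by
        have := hneg y ⟨hymem.1, h⟩
        exact ((sign_f_eq_sign_Hf f hf hymem.1 hymem.2).1).2 this
      rw [hyz] at this; exact lt_irrefl _ this
    · exact h
    · exfalso
      have hfγs : f γs = 0 := ((sign_f_eq_sign_Hf f hf hmem.1 hmem.2).2.2).2 hz
      have : f γs < 0 := hyneg γs ⟨hmem.1, h⟩
      rw [hfγs] at this; exact lt_irrefl _ this
end

section
/- The function g(γ) = (γ^{−1}−1)^{−2γ} − (1−2γ) satisfies: g(0+) = 0, g is first negative and then positive on (0,1/2), i.e., there exists a unique γ* ∈ (0,1/2) with g(γ*) = 0, g < 0 on (0,γ*) and g > 0 on (γ*, 1/2). Equivalently, β_γ = (γ^{−1}−1)^{−γ}/sqrt(1−2γ) satisfies β_γ < 1 for γ ∈ (0,γ*) and β_γ > 1 for γ ∈ (γ*, 1/2). -/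
open Set

open Real


noncomputable def hfun (x : ℝ) : ℝ :=
  -(2*x) * (Real.log (1-x) - Real.log x) - Real.log (1 - 2*x)

noncomputable def hfun1 (x : ℝ) : ℝ :=
  -2 * (Real.log (1-x) - Real.log x) + 2*x/(1-x) + 2 + 2/(1-2*x)

lemma hasDerivAt_hfun {x : ℝ} (hx : 0 < x) (hx2 : x < 1/2) :
    HasDerivAt hfun (hfun1 x) x := by
  have h1x : (0:ℝ) < 1 - x := by linarith
  have h12x : (0:ℝ) < 1 - 2*x := by linarith
  have d1 : HasDerivAt (fun y : ℝ => 1 - y) (-1) x := by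
    simpa using (hasDerivAt_id' x).const_sub (1:ℝ)
  have dlog1 : HasDerivAt (fun y : ℝ => Real.log (1 - y)) ((1-x)⁻¹ * (-1)) x :=
    (Real.hasDerivAt_log h1x.ne').comp x d1
  have dlog2 : HasDerivAt (fun y : ℝ => Real.log y) x⁻¹ x := Real.hasDerivAt_log hx.ne'
  have dv : HasDerivAt (fun y : ℝ => Real.log (1-y) - Real.log y) ((1-x)⁻¹ * (-1) - x⁻¹) x :=
    dlog1.sub dlog2
  have du : HasDerivAt (fun y : ℝ => -(2*y)) (-2) x := by
    simpa using ((hasDerivAt_id' x).const_mul (2:ℝ)).fun_neg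
  have duv := du.mul dv
  have d2 : HasDerivAt (fun y : ℝ => 1 - 2*y) (-2) x := by
    simpa using ((hasDerivAt_id' x).const_mul (2:ℝ)).const_sub (1:ℝ)
  have dlog3 : HasDerivAt (fun y : ℝ => Real.log (1 - 2*y)) ((1-2*x)⁻¹ * (-2)) x :=
    by have := (Real.hasDerivAt_log h12x.ne').comp x d2; exact this
  have H := duv.sub dlog3
  have hne1 : (1:ℝ) - x ≠ 0 := h1x.ne'
  have hne2 : x ≠ 0 := hx.ne'
  have hne3 : (1:ℝ) - 2*x ≠ 0 := h12x.ne'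
  refine H.congr_deriv ?_
  unfold hfun1
  field_simp
  ring

noncomputable def hfun2 (x : ℝ) : ℝ :=
  2/(1-x) + 2/x + 2/(1-x)^2 + 4/(1-2*x)^2

lemma hasDerivAt_hfun1 {x : ℝ} (hx : 0 < x) (hx2 : x < 1/2) :
    HasDerivAt hfun1 (hfun2 x) x := by
  have h1x : (0:ℝ) < 1 - x := by linarith
  have h12x : (0:ℝ) < 1 - 2*x := by linarith
  have d1 : HasDerivAt (fun y : ℝ => 1 - y) (-1) x := by
    simpa using (hasDerivAt_id' x).const_sub (1:ℝ)
  have dlog1 : HasDerivAt (fun y : ℝ => Real.log (1 - y)) ((1-x)⁻¹ * (-1)) x :=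
    (Real.hasDerivAt_log h1x.ne').comp x d1
  have dlog2 : HasDerivAt (fun y : ℝ => Real.log y) x⁻¹ x := Real.hasDerivAt_log hx.ne'
  have dv : HasDerivAt (fun y : ℝ => -2 * (Real.log (1-y) - Real.log y))
      (-2 * ((1-x)⁻¹ * (-1) - x⁻¹)) x := (dlog1.sub dlog2).const_mul (-2)
  have dn : HasDerivAt (fun y : ℝ => 2*y) 2 x := by
    simpa using (hasDerivAt_id x).const_mul (2:ℝ)
  have dq : HasDerivAt (fun y : ℝ => 2*y/(1-y)) ((2*(1-x) - 2*x*(-1))/(1-x)^2) x :=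
    dn.div d1 h1x.ne'
  have d2 : HasDerivAt (fun y : ℝ => 1 - 2*y) (-2) x := by
    simpa using ((hasDerivAt_id' x).const_mul (2:ℝ)).const_sub (1:ℝ)
  have dq2 : HasDerivAt (fun y : ℝ => 2/(1-2*y)) ((0*(1-2*x) - 2*(-2))/(1-2*x)^2) x :=
    (hasDerivAt_const x (2:ℝ)).div d2 h12x.ne'
  have H := ((dv.add dq).add (hasDerivAt_const x (2:ℝ))).add dq2
  have hne1 : (1:ℝ) - x ≠ 0 := h1x.ne'
  have hne2 : x ≠ 0 := hx.ne'
  have hne3 : (1:ℝ) - 2*x ≠ 0 := h12x.ne'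
  refine H.congr_deriv ?_
  unfold hfun2
  field_simp
  ring

lemma hfun_strictConvex : StrictConvexOn ℝ (Ioo (0:ℝ) (1/2)) hfun := by
  apply strictConvexOn_of_deriv2_pos (convex_Ioo _ _)
  · intro x hx
    exact (hasDerivAt_hfun hx.1 hx.2).continuousAt.continuousWithinAt
  · intro x hx
    rw [interior_Ioo] at hx
    obtain ⟨hx1, hx2⟩ := hx
    have e1 : deriv hfun =ᶠ[nhds x] hfun1 := by
      filter_upwards [Ioo_mem_nhds hx1 hx2] with y hy
      exact (hasDerivAt_hfun hy.1 hy.2).deriv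
    have e2 : deriv^[2] hfun x = hfun2 x := by
      show deriv (deriv hfun) x = hfun2 x
      rw [e1.deriv_eq]
      exact (hasDerivAt_hfun1 hx1 hx2).deriv
    rw [e2]
    have h1x : (0:ℝ) < 1 - x := by linarith
    have h12x : (0:ℝ) < 1 - 2*x := by linarith
    unfold hfun2
    positivity

lemma exp_ts_lt : Real.exp (10/7) < 17/3 := by
  refine lt_of_pow_lt_pow_left₀ 7 (by norm_num) ?_
  have e7 : Real.exp (10/7) ^ 7 = Real.exp 10 := by
    rw [← Real.exp_nat_mul]; norm_num
  have e10 : Real.exp 10 = Real.exp 1 ^ 10 := by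
    rw [← Real.exp_nat_mul]; norm_num
  rw [e7, e10]
  calc Real.exp 1 ^ 10 < 2.7182818286 ^ 10 :=
        pow_lt_pow_left₀ Real.exp_one_lt_d9 (Real.exp_pos 1).le (by norm_num)
    _ < (17/3)^7 := by norm_num

lemma hfun_neg {x : ℝ} (hx : 0 < x) (hxc : x ≤ 3/20) : hfun x < 0 := by
  have h1x : (0:ℝ) < 1 - x := by linarith
  have h12x : (0:ℝ) < 1 - 2*x := by linarith
  have hlog : Real.log (1-x) - Real.log x = Real.log ((1-x)/x) :=
    (Real.log_div h1x.ne' hx.ne').symm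
  have hL1 : Real.log ((17:ℝ)/3) ≤ Real.log ((1-x)/x) := by
    apply Real.log_le_log (by norm_num)
    rw [div_le_div_iff₀ (by norm_num) hx]
    linarith
  have hL2 : (10:ℝ)/7 < Real.log ((1-x)/x) :=
    lt_of_lt_of_le ((Real.lt_log_iff_exp_lt (by norm_num)).2 exp_ts_lt) hL1
  have hlog2 : -Real.log (1-2*x) ≤ 2*x/(1-2*x) := by
    have h := Real.log_le_sub_one_of_pos (inv_pos.2 h12x)
    rw [Real.log_inv] at h
    have e : (1-2*x)⁻¹ - 1 = 2*x/(1-2*x) := by field_simp; ring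
    linarith [e ▸ h]
  have hC : 2*x/(1-2*x) ≤ 2*x*(10/7) := by
    rw [div_le_iff₀ h12x]
    nlinarith [mul_nonneg hx.le (show (0:ℝ) ≤ 3 - 20*x by linarith)]
  have hB : -(2*x) * Real.log ((1-x)/x) < -(2*x) * (10/7) :=
    mul_lt_mul_of_neg_left hL2 (by linarith)
  unfold hfun
  rw [hlog]
  linarith

lemma hfun_pos_b : 0 < hfun (9/20) := by
  have h1 : Real.log (11/9 : ℝ) ≤ 2/9 := by
    have := Real.log_le_sub_one_of_pos (show (0:ℝ) < 11/9 by norm_num); linarith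
  have hlog10 : (1:ℝ) < Real.log 10 := by
    rw [Real.lt_log_iff_exp_lt (by norm_num)]
    exact lt_trans Real.exp_one_lt_d9 (by norm_num)
  have e1 : hfun (9/20) = -(9/10) * Real.log (11/9) + Real.log 10 := by
    unfold hfun
    rw [show Real.log (1 - 9/20 : ℝ) - Real.log (9/20 : ℝ)
          = Real.log ((1 - 9/20)/(9/20) : ℝ) from (Real.log_div (by norm_num) (by norm_num)).symm]
    rw [show ((1:ℝ) - 9/20)/(9/20) = 11/9 by norm_num]
    rw [show (1:ℝ) - 2*(9/20) = 10⁻¹ by norm_num, Real.log_inv]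
    ring
  rw [e1]
  linarith

lemma conv_between {f : ℝ → ℝ} {s : Set ℝ} (hf : StrictConvexOn ℝ s f) {a u v : ℝ}
    (ha : a ∈ s) (hv : v ∈ s) (h1 : a < u) (h2 : u < v) :
    f u < ((v-u)/(v-a)) * f a + ((u-a)/(v-a)) * f v := by
  have hav : a < v := lt_trans h1 h2
  have hd : 0 < v - a := by linarith
  have ht : 0 < (v-u)/(v-a) := div_pos (by linarith) hd
  have hs : 0 < (u-a)/(v-a) := div_pos (by linarith) hd
  have hts : (v-u)/(v-a) + (u-a)/(v-a) = 1 := by field_simp; ring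
  have h := hf.2 ha hv (ne_of_lt hav) ht hs hts
  have harg : ((v-u)/(v-a)) • a + ((u-a)/(v-a)) • v = u := by
    simp only [smul_eq_mul]
    field_simp
    ring
  rw [harg] at h
  simpa using h


lemma hfun_continuousOn : ContinuousOn hfun (Icc (3/20:ℝ) (9/20)) := by
  intro x hx
  have hx1 : (0:ℝ) < x := by linarith [hx.1]
  have hx2 : x < 1/2 := by linarith [hx.2]
  exact (hasDerivAt_hfun hx1 hx2).continuousAt.continuousWithinAt

/-- The function `g(γ) = (γ⁻¹−1)^{−2γ} − (1−2γ)` has a unique zero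
`γ* ∈ (0,1/2)`, with `g < 0` on `(0,γ*)` and `g > 0` on `(γ*,1/2)`; equivalently,
`β_γ = (γ⁻¹−1)^{−γ}/sqrt(1−2γ)` satisfies `β_γ < 1` on `(0,γ*)` and `β_γ > 1`
on `(γ*,1/2)`. -/

theorem unique_zero_of_g_and_beta_comparison
    (g β : ℝ → ℝ)
    (hg : ∀ γ : ℝ, g γ = (γ⁻¹ - 1) ^ (-(2 * γ)) - (1 - 2 * γ))
    (hβ : ∀ γ : ℝ, β γ = (γ⁻¹ - 1) ^ (-γ) / Real.sqrt (1 - 2 * γ)) :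
    ∃! γs : ℝ, γs ∈ Ioo (0:ℝ) (1/2) ∧ g γs = 0 ∧
      (∀ γ ∈ Ioo (0:ℝ) γs, g γ < 0 ∧ β γ < 1) ∧
      (∀ γ ∈ Ioo γs (1/2 : ℝ), 0 < g γ ∧ 1 < β γ) := by
  have key : ∀ γ : ℝ, γ ∈ Ioo (0:ℝ) (1/2) →
      g γ = Real.exp (Real.log (1-2*γ) + hfun γ) - Real.exp (Real.log (1-2*γ)) ∧
      β γ = Real.exp (hfun γ / 2) := by
    intro γ hγ
    obtain ⟨h0, h2⟩ := hγ
    have h1γ : (0:ℝ) < 1 - γ := by linarith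
    have h12 : (0:ℝ) < 1 - 2*γ := by linarith
    have hbeq : γ⁻¹ - 1 = (1-γ)/γ := by field_simp
    have hbase : (0:ℝ) < γ⁻¹ - 1 := by rw [hbeq]; positivity
    have hlogb : Real.log (γ⁻¹ - 1) = Real.log (1-γ) - Real.log γ := by
      rw [hbeq, Real.log_div h1γ.ne' h0.ne']
    constructor
    · rw [hg γ, Real.rpow_def_of_pos hbase, Real.exp_log h12]
      congr 2
      rw [hlogb]; unfold hfun; ring
    · rw [hβ γ, Real.rpow_def_of_pos hbase]
      have hsq : Real.sqrt (1-2*γ) = Real.exp (Real.log (1-2*γ)/2) := by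
        rw [← Real.log_sqrt h12.le, Real.exp_log (Real.sqrt_pos.2 h12)]
      rw [hsq, ← Real.exp_sub]
      congr 1
      rw [hlogb]; unfold hfun; ring
  have sign : ∀ γ ∈ Ioo (0:ℝ) (1/2),
      (hfun γ < 0 → g γ < 0 ∧ β γ < 1) ∧ (0 < hfun γ → 0 < g γ ∧ 1 < β γ) ∧
      (hfun γ = 0 → g γ = 0) := by
    intro γ hγ
    obtain ⟨kg, kβ⟩ := key γ hγ
    refine ⟨fun hn => ⟨?_, ?_⟩, fun hp => ⟨?_, ?_⟩, fun h0 => ?_⟩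
    · rw [kg, sub_neg]; exact Real.exp_lt_exp.2 (by linarith)
    · rw [kβ, ← Real.exp_zero]; exact Real.exp_lt_exp.2 (by linarith)
    · rw [kg, sub_pos]; exact Real.exp_lt_exp.2 (by linarith)
    · rw [kβ, ← Real.exp_zero]; exact Real.exp_lt_exp.2 (by linarith)
    · rw [kg, h0, add_zero, sub_self]
  -- IVT
  have hivt := intermediate_value_Icc (by norm_num : (3/20:ℝ) ≤ 9/20) hfun_continuousOn
  have h0mem : (0:ℝ) ∈ Icc (hfun (3/20)) (hfun (9/20)) :=
    ⟨(hfun_neg (by norm_num) le_rfl).le, hfun_pos_b.le⟩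
  obtain ⟨c, hc, hc0⟩ := hivt h0mem
  have hcI : c ∈ Ioo (0:ℝ) (1/2) := ⟨by linarith [hc.1], by linarith [hc.2]⟩
  have hamem : (3/20:ℝ) ∈ Ioo (0:ℝ) (1/2) := by norm_num
  have hfa : hfun (3/20) < 0 := hfun_neg (by norm_num) le_rfl
  have hac : (3/20:ℝ) < c := by
    rcases eq_or_lt_of_le hc.1 with he | h
    · exfalso; rw [← he] at hc0; rw [hc0] at hfa; exact lt_irrefl 0 hfa
    · exact h
  have hneg : ∀ γ ∈ Ioo (0:ℝ) c, hfun γ < 0 := by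
    intro γ hγ
    by_cases hle : γ ≤ 3/20
    · exact hfun_neg hγ.1 hle
    · push_neg at hle
      have h1 := conv_between hfun_strictConvex hamem hcI hle hγ.2
      rw [hc0] at h1
      have ht : 0 < (c-γ)/(c-3/20) := div_pos (by linarith [hγ.2]) (by linarith)
      nlinarith [mul_neg_of_pos_of_neg ht hfa]
  have hpos : ∀ γ ∈ Ioo c (1/2:ℝ), 0 < hfun γ := by
    intro γ hγ
    have hγmem : γ ∈ Ioo (0:ℝ) (1/2) := ⟨by linarith [hγ.1, hcI.1], hγ.2⟩
    have h1 := conv_between hfun_strictConvex hamem hγmem hac hγ.1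
    rw [hc0] at h1
    have ht : 0 < (γ-c)/(γ-3/20) := div_pos (by linarith [hγ.1]) (by linarith [hγ.1])
    have hs : 0 < (c-3/20)/(γ-3/20) := div_pos (by linarith) (by linarith [hγ.1])
    have h2 : 0 < (c-3/20)/(γ-3/20) * hfun γ := by
      nlinarith [mul_neg_of_pos_of_neg ht hfa]
    by_contra hcon
    push_neg at hcon
    nlinarith [mul_nonpos_of_nonneg_of_nonpos hs.le hcon]
  refine ⟨c, ⟨hcI, (sign c hcI).2.2 hc0, ?_, ?_⟩, ?_⟩
  · intro γ hγ
    have hγI : γ ∈ Ioo (0:ℝ) (1/2) := ⟨hγ.1, lt_trans hγ.2 hcI.2⟩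
    exact (sign γ hγI).1 (hneg γ hγ)
  · intro γ hγ
    have hγI : γ ∈ Ioo (0:ℝ) (1/2) := ⟨lt_trans hcI.1 hγ.1, hγ.2⟩
    exact (sign γ hγI).2.1 (hpos γ hγ)
  · rintro y ⟨hyI, hy0, _, _⟩
    by_contra hne
    rcases lt_or_gt_of_ne hne with hlt | hgt
    · have := (sign y hyI).1 (hneg y ⟨hyI.1, hlt⟩)
      rw [hy0] at this; exact lt_irrefl 0 this.1
    · have := (sign y hyI).2.1 (hpos y ⟨hgt, hyI.2⟩)
      rw [hy0] at this; exact lt_irrefl 0 this.1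
end

section
/- Suppose F̄ is regularly varying at ∞ with index −1/γ for some γ ∈ (0, 1/2), and let e_τ → ∞ as τ → 1. Then lim_{τ→1} E[((X−e_τ)₊)²] / (e_τ² F̄(e_τ)) = 2γ²/((1−2γ)(1−γ)), where X ≥ 0 has survival function F̄ with E[X²] < ∞. -/
open MeasureTheory Set Filter

section Aux
open Real

lemma my_integral_comp_add_right_Ioi (g : ℝ → ℝ) (a d : ℝ) :
    (∫ x in Ioi a, g (x + d)) = ∫ x in Ioi (a + d), g x := by
  rw [← integral_indicator measurableSet_Ioi, ← integral_indicator measurableSet_Ioi,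
    ← integral_add_right_eq_self (fun x => (Ioi (a + d)).indicator g x) d]
  congr 1
  ext x
  simp only [indicator_apply, mem_Ioi, add_lt_add_iff_right]

lemma my_I_val {γ : ℝ} (hγ : γ ∈ Ioo (0:ℝ) (1/2)) :
    ∫ u in Ioi (1:ℝ), u ^ (-(1/γ)) * (u - 1) = γ^2/((1-2*γ)*(1-γ)) := by
  obtain ⟨hγ0, hγ2⟩ := hγ
  have hp2 : (2:ℝ) < 1/γ := by
    rw [lt_div_iff₀ hγ0]; linarith
  have h1 : (1 - 1/γ : ℝ) < -1 := by linarith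
  have h2 : (-(1/γ) : ℝ) < -1 := by linarith
  have hi1 := integrableOn_Ioi_rpow_of_lt h1 one_pos
  have hi2 := integrableOn_Ioi_rpow_of_lt h2 one_pos
  have key : ∫ u in Ioi (1:ℝ), u ^ (-(1/γ)) * (u - 1)
      = ∫ u in Ioi (1:ℝ), (u ^ (1 - 1/γ) - u ^ (-(1/γ))) := by
    refine setIntegral_congr_fun measurableSet_Ioi (fun u hu => ?_)
    have hu0 : (0:ℝ) < u := lt_trans one_pos hu
    have : u ^ (1 - 1/γ) = u ^ (-(1/γ)) * u := by
      rw [show (1 - 1/γ : ℝ) = -(1/γ) + 1 by ring, rpow_add hu0, rpow_one]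
    rw [this]; ring
  rw [key, integral_sub hi1 hi2, integral_Ioi_rpow_of_lt h1 one_pos,
    integral_Ioi_rpow_of_lt h2 one_pos]
  rw [one_rpow, one_rpow]
  have hγne : γ ≠ 0 := ne_of_gt hγ0
  have hA : (1 - 1/γ + 1 : ℝ) = -(1-2*γ)/γ := by field_simp; ring
  have hB : (-(1/γ) + 1 : ℝ) = -(1-γ)/γ := by field_simp; ring
  have hne3 : (1 - 2*γ : ℝ) ≠ 0 := by linarith
  have hne4 : (1 - γ : ℝ) ≠ 0 := by linarith
  have hkey : ∀ A : ℝ, A ≠ 0 → -1 / (-A/γ) = γ/A := by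
    intro A hA; field_simp
  rw [hA, hB, hkey _ hne3, hkey _ hne4, div_sub_div _ _ hne3 hne4]
  congr 1
  ring

lemma my_potter {F : ℝ → ℝ} (hF : Antitone F) (hFnn : ∀ x, 0 ≤ F x) {ρ : ℝ} (hρ : 0 < ρ)
    {t0 : ℝ} (ht0 : 1 ≤ t0)
    (hhalf : ∀ t, t0 ≤ t → F (t * 2) ≤ 2 ^ (-ρ) * F t) :
    ∀ t, t0 ≤ t → ∀ s, 1 ≤ s → F (t * s) ≤ 2 ^ ρ * s ^ (-ρ) * F t := by
  have h2ρ : (1:ℝ) ≤ 2 ^ ρ := one_le_rpow one_le_two hρ.le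
  have main : ∀ n : ℕ, ∀ t, t0 ≤ t → ∀ s, 1 ≤ s → s ≤ 2 ^ n →
      F (t * s) ≤ 2 ^ ρ * s ^ (-ρ) * F t := by
    intro n
    induction n with
    | zero =>
      intro t ht s hs1 hs2
      have hs : s = 1 := le_antisymm (by simpa using hs2) hs1
      subst hs
      simp only [mul_one, one_rpow]
      nlinarith [hFnn t]
    | succ n ih =>
      intro t ht s hs1 hs2
      have htpos : (0:ℝ) < t := lt_of_lt_of_le one_pos (le_trans ht0 ht)
      by_cases hs2' : s ≤ 2
      · -- small s
        have hFle : F (t * s) ≤ F t := hF (by nlinarith)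
        have hsp : (0:ℝ) < s := lt_of_lt_of_le one_pos hs1
        have h1 : (2:ℝ) ^ (-ρ) ≤ s ^ (-ρ) :=
          rpow_le_rpow_of_nonpos hsp hs2' (neg_nonpos.mpr hρ.le)
        have h2 : (1:ℝ) ≤ 2 ^ ρ * s ^ (-ρ) := by
          have : (2:ℝ) ^ ρ * 2 ^ (-ρ) = 1 := by
            rw [← rpow_add two_pos]; simp
          calc (1:ℝ) = 2 ^ ρ * 2 ^ (-ρ) := this.symm
            _ ≤ 2 ^ ρ * s ^ (-ρ) :=
              mul_le_mul_of_nonneg_left h1 (rpow_nonneg (by norm_num) _)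
        nlinarith [hFnn (t * s), hFnn t]
      · -- large s : use induction at t*2, s/2
        push_neg at hs2'
        have hs2half : 1 ≤ s / 2 := by linarith
        have hs2half' : s / 2 ≤ 2 ^ n := by
          rw [div_le_iff₀ two_pos]
          calc s ≤ 2 ^ (n+1) := hs2
            _ = 2 ^ n * 2 := by ring
        have ht2 : t0 ≤ t * 2 := by nlinarith
        have step := ih (t * 2) ht2 (s / 2) hs2half hs2half'
        have heq : t * 2 * (s / 2) = t * s := by ring
        rw [heq] at step
        have hhalf' := hhalf t ht
        have hsp : (0:ℝ) < s := by linarith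
        have hdiv : (s / 2 : ℝ) ^ (-ρ) = s ^ (-ρ) * 2 ^ ρ := by
          rw [div_rpow hsp.le (by norm_num : (0:ℝ) ≤ 2), rpow_neg (by norm_num : (0:ℝ) ≤ 2),
            div_eq_mul_inv, inv_inv]
        have hnn1 : (0:ℝ) ≤ 2 ^ ρ * (s/2) ^ (-ρ) :=
          mul_nonneg (rpow_nonneg (by norm_num) _) (rpow_nonneg (by linarith) _)
        calc F (t * s) ≤ 2 ^ ρ * (s/2) ^ (-ρ) * F (t * 2) := step
          _ ≤ 2 ^ ρ * (s/2) ^ (-ρ) * (2 ^ (-ρ) * F t) :=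
            mul_le_mul_of_nonneg_left hhalf' hnn1
          _ = 2 ^ ρ * s ^ (-ρ) * F t := by
            rw [hdiv]
            have h0 : (2:ℝ) ^ ρ * 2 ^ (-ρ) = 1 := by rw [← rpow_add two_pos]; simp
            have h1 : (2:ℝ) ^ ρ * (s ^ (-ρ) * 2 ^ ρ) * (2 ^ (-ρ) * F t)
                = 2 ^ ρ * s ^ (-ρ) * F t * (2 ^ ρ * 2 ^ (-ρ)) := by ring
            rw [h1, h0, mul_one]
  intro t ht s hs
  obtain ⟨n, hn⟩ := pow_unbounded_of_one_lt s (one_lt_two (α := ℝ))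
  exact main n t ht s hs hn.le

lemma my_sq_layercake {Ω : Type*} [MeasurableSpace Ω] (μ : Measure Ω) [IsFiniteMeasure μ]
    (Y : Ω → ℝ) (hnn : ∀ ω, 0 ≤ Y ω) (hmeas : AEMeasurable Y μ)
    (hint : Integrable (fun ω => Y ω ^ 2) μ)
    (G : ℝ → ℝ) (hG : Measurable G) (hGnn : ∀ s, 0 ≤ G s)
    (hGeq : ∀ s, 0 < s → G s = (μ {ω | s < Y ω}).toReal) :
    (∫ ω, Y ω ^ 2 ∂μ) = (∫ s in Ioi (0:ℝ), 2 * s * G s) ∧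
      IntegrableOn (fun s => 2 * s * G s) (Ioi (0:ℝ)) := by
  have g_int : ∀ t > (0:ℝ), IntervalIntegrable (fun s => 2 * s) volume 0 t :=
    fun t _ => (continuous_const.mul continuous_id).intervalIntegrable 0 t
  have g_nn : ∀ᵐ s ∂(volume.restrict (Ioi (0:ℝ))), 0 ≤ 2 * s := by
    rw [ae_restrict_iff' measurableSet_Ioi]
    exact ae_of_all _ fun s hs => mul_nonneg (by norm_num) (mem_Ioi.mp hs).le
  have key := lintegral_comp_eq_lintegral_meas_lt_mul μ (ae_of_all _ hnn) hmeas g_int g_nn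
  have hsq : ∀ y : ℝ, (∫ s in (0:ℝ)..y, 2 * s) = y ^ 2 := by
    intro y
    rw [intervalIntegral.integral_const_mul, integral_id]
    ring
  simp_rw [hsq] at key
  have key2 : (∫⁻ ω, ENNReal.ofReal (Y ω ^ 2) ∂μ)
      = ∫⁻ s in Ioi (0:ℝ), ENNReal.ofReal (2 * s * G s) := by
    rw [key]
    refine setLIntegral_congr_fun measurableSet_Ioi (fun s hs => ?_)
    have h1 : μ {a | s < Y a} = ENNReal.ofReal (G s) := by
      rw [hGeq s hs, ENNReal.ofReal_toReal (measure_ne_top μ _)]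
    rw [h1, ← ENNReal.ofReal_mul (hGnn s), mul_comm (G s) (2 * s)]
  have hlhs : ENNReal.ofReal (∫ ω, Y ω ^ 2 ∂μ) = ∫⁻ ω, ENNReal.ofReal (Y ω ^ 2) ∂μ :=
    ofReal_integral_eq_lintegral_ofReal hint (ae_of_all _ fun ω => sq_nonneg _)
  have hnn' : ∀ᵐ s ∂(volume.restrict (Ioi (0:ℝ))), 0 ≤ 2 * s * G s := by
    rw [ae_restrict_iff' measurableSet_Ioi]
    exact ae_of_all _ fun s hs => mul_nonneg (mul_nonneg (by norm_num) (mem_Ioi.mp hs).le) (hGnn s)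
  have hintG : IntegrableOn (fun s => 2 * s * G s) (Ioi (0:ℝ)) := by
    refine ⟨((measurable_const.mul measurable_id).mul hG).aestronglyMeasurable, ?_⟩
    rw [hasFiniteIntegral_iff_ofReal hnn', ← key2, ← hlhs]
    exact ENNReal.ofReal_lt_top
  refine ⟨?_, hintG⟩
  have hrhs : ENNReal.ofReal (∫ s in Ioi (0:ℝ), 2 * s * G s)
      = ∫⁻ s in Ioi (0:ℝ), ENNReal.ofReal (2 * s * G s) :=
    ofReal_integral_eq_lintegral_ofReal hintG hnn'
  have : ENNReal.ofReal (∫ ω, Y ω ^ 2 ∂μ) = ENNReal.ofReal (∫ s in Ioi (0:ℝ), 2 * s * G s) := by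
    rw [hlhs, hrhs, key2]
  rwa [ENNReal.ofReal_eq_ofReal_iff (integral_nonneg fun ω => sq_nonneg _)
    (setIntegral_nonneg measurableSet_Ioi fun s hs =>
      mul_nonneg (mul_nonneg (by norm_num) (mem_Ioi.mp hs).le) (hGnn s))] at this


end Aux

/-- Suppose `F̄` is regularly varying at `∞` with index `−1/γ` for some
`γ ∈ (0,1/2)`, and `e_τ → ∞` as `τ → 1⁻`.  Then
`E[((X−e_τ)₊)²]/(e_τ² F̄(e_τ)) → 2γ²/((1−2γ)(1−γ))`, where `X ≥ 0` has survival
function `F̄` with `E[X²] < ∞`. -/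
theorem limit_ratio_sq_pos_part
    {Ω : Type*} [MeasureSpace Ω] (μ : Measure Ω) [IsProbabilityMeasure μ]
    (X : Ω → ℝ) (hXnn : ∀ ω, 0 ≤ X ω) (hX : MemLp X 2 μ)
    (Fbar : ℝ → ℝ) (hFbar : ∀ x : ℝ, Fbar x = (μ {ω | x < X ω}).toReal)
    (γ : ℝ) (hγ : γ ∈ Ioo (0:ℝ) (1/2))
    (hRV : ∀ x : ℝ, 0 < x →
      Tendsto (fun t : ℝ => Fbar (t * x) / Fbar t) atTop (nhds (x ^ (-(1/γ)))))
    (e : ℝ → ℝ) (he : Tendsto e (nhdsWithin 1 (Iio 1)) atTop) :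
    Tendsto (fun τ : ℝ =>
        (∫ ω, (max (X ω - e τ) 0) ^ 2 ∂μ) / ((e τ) ^ 2 * Fbar (e τ)))
      (nhdsWithin 1 (Iio 1))
      (nhds (2 * γ ^ 2 / ((1 - 2 * γ) * (1 - γ)))) := by
  obtain ⟨hγ0, hγ2⟩ := hγ
  have hp2 : (2:ℝ) < 1/γ := by rw [lt_div_iff₀ hγ0]; linarith
  have hFnn : ∀ x, 0 ≤ Fbar x := fun x => by rw [hFbar]; exact ENNReal.toReal_nonneg
  have hAnti : Antitone Fbar := by
    intro x y hxy
    rw [hFbar, hFbar]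
    exact ENNReal.toReal_mono (measure_ne_top μ _)
      (measure_mono fun ω h => lt_of_le_of_lt hxy h)
  have hFmeas : Measurable Fbar := hAnti.measurable
  set ρ : ℝ := (2 + 1/γ)/2 with hρdef
  have hρ2 : 2 < ρ := by rw [hρdef]; linarith
  have hρp : ρ < 1/γ := by rw [hρdef]; linarith
  have hρ0 : 0 < ρ := by linarith
  have h2 := hRV 2 two_pos
  have hlt : (2:ℝ) ^ (-(1/γ)) < 2 ^ (-ρ) :=
    (Real.rpow_lt_rpow_left_iff one_lt_two).mpr (by linarith)
  have hpos0 : (0:ℝ) < 2 ^ (-(1/γ)) := Real.rpow_pos_of_pos two_pos _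
  have hevent1 : ∀ᶠ t in atTop, Fbar (t*2)/Fbar t < 2 ^ (-ρ) :=
    h2.eventually (eventually_lt_nhds hlt)
  have hevent2 : ∀ᶠ t in atTop, 0 < Fbar (t*2)/Fbar t :=
    h2.eventually (eventually_gt_nhds hpos0)
  have hFpos : ∀ᶠ t in atTop, 0 < Fbar t := by
    filter_upwards [hevent2] with t h
    rcases (hFnn t).lt_or_eq with h' | h'
    · exact h'
    · rw [← h', div_zero] at h; exact absurd h (lt_irrefl 0)
  obtain ⟨t1, ht1⟩ := (hevent1.and hFpos).exists_forall_of_atTop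
  set t0 : ℝ := max t1 1 with ht0def
  have ht01 : (1:ℝ) ≤ t0 := le_max_right _ _
  have hhalf : ∀ t, t0 ≤ t → Fbar (t * 2) ≤ 2 ^ (-ρ) * Fbar t := by
    intro t ht
    have h := ht1 t (le_trans (le_max_left _ _) ht)
    exact le_of_lt ((div_lt_iff₀ h.2).mp h.1)
  have hFpos' : ∀ t, t0 ≤ t → 0 < Fbar t := fun t ht =>
    (ht1 t (le_trans (le_max_left _ _) ht)).2
  have potter := my_potter hAnti hFnn hρ0 ht01 hhalf
  -- the eventual identity
  have hid : ∀ᶠ t in atTop,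
      2 * ∫ u in Ioi (1:ℝ), Fbar (t*u)/Fbar t * (u - 1)
        = (∫ ω, (max (X ω - t) 0) ^ 2 ∂μ) / (t ^ 2 * Fbar t) := by
    filter_upwards [eventually_ge_atTop t0] with t ht
    have htpos : (0:ℝ) < t := lt_of_lt_of_le one_pos (le_trans ht01 ht)
    have hFt : 0 < Fbar t := hFpos' t ht
    set Y : Ω → ℝ := fun ω => max (X ω - t) 0 with hYdef
    have hYnn : ∀ ω, 0 ≤ Y ω := fun ω => le_max_right _ _
    have hYmeas : AEMeasurable Y μ :=
      (hX.aestronglyMeasurable.aemeasurable.sub aemeasurable_const).max aemeasurable_const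
    have hYle : ∀ ω, Y ω ≤ X ω := fun ω =>
      max_le (by linarith [hXnn ω]) (hXnn ω)
    have hYint : Integrable (fun ω => Y ω ^ 2) μ := by
      refine (hX.integrable_sq).mono' ((hYmeas.pow_const 2).aestronglyMeasurable)
        (ae_of_all _ fun ω => ?_)
      rw [Real.norm_eq_abs, abs_of_nonneg (sq_nonneg _)]
      exact pow_le_pow_left₀ (hYnn ω) (hYle ω) 2
    have hGmeas : Measurable (fun s => Fbar (t + s)) :=
      hFmeas.comp (measurable_const.add measurable_id)
    have hGeq : ∀ s, 0 < s → Fbar (t + s) = (μ {ω | s < Y ω}).toReal := by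
      intro s hs
      have hset : {ω | s < Y ω} = {ω : Ω | t + s < X ω} := by
        ext ω
        simp only [mem_setOf_eq, hYdef, lt_max_iff]
        constructor
        · rintro (h | h)
          · linarith
          · linarith
        · intro h; exact Or.inl (by linarith)
      rw [hFbar, hset]
    obtain ⟨hEq, hInt⟩ := my_sq_layercake μ Y hYnn hYmeas hYint
      (fun s => Fbar (t + s)) hGmeas (fun s => hFnn _) hGeq
    -- change of variables
    set g : ℝ → ℝ := fun x => 2 * (x - t) * Fbar x with hgdef
    have hshift : (∫ s in Ioi (0:ℝ), g (s + t)) = ∫ x in Ioi ((0:ℝ) + t), g x :=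
      my_integral_comp_add_right_Ioi g 0 t
    have hstep1 : (∫ s in Ioi (0:ℝ), 2 * s * Fbar (t + s)) = ∫ s in Ioi (0:ℝ), g (s + t) := by
      refine integral_congr_ae (ae_of_all _ fun s => ?_)
      simp only [hgdef, add_sub_cancel_right]
      rw [add_comm t s]
    have hscale := integral_comp_mul_left_Ioi g 1 htpos
    rw [mul_one, smul_eq_mul] at hscale
    -- hscale : ∫ u in Ioi 1, g (t * u) = t⁻¹ * ∫ x in Ioi t, g x
    have hgt : ∀ u : ℝ, g (t * u) = (2*t) * ((u - 1) * Fbar (t * u)) := by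
      intro u; simp only [hgdef]; ring
    have hJ : (∫ u in Ioi (1:ℝ), g (t * u)) = (2*t) * ∫ u in Ioi (1:ℝ), (u - 1) * Fbar (t * u) := by
      rw [← integral_const_mul]
      exact integral_congr_ae (ae_of_all _ fun u => hgt u)
    set J : ℝ := ∫ u in Ioi (1:ℝ), (u - 1) * Fbar (t * u) with hJdef
    have htot : (∫ ω, Y ω ^ 2 ∂μ) = t * ((2*t) * J) := by
      rw [hEq, hstep1, hshift, zero_add]
      rw [← hJ, hscale]
      field_simp
    have hdiv : J / Fbar t = ∫ u in Ioi (1:ℝ), Fbar (t*u)/Fbar t * (u - 1) := by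
      rw [hJdef, ← integral_div]
      exact integral_congr_ae (ae_of_all _ fun u => by ring)
    have : (∫ ω, (max (X ω - t) 0) ^ 2 ∂μ) = t * ((2*t) * J) := htot
    rw [this, ← hdiv]
    field_simp
  -- dominated convergence
  have hDCT : Tendsto (fun t => ∫ u in Ioi (1:ℝ), Fbar (t*u)/Fbar t * (u - 1)) atTop
      (nhds (∫ u in Ioi (1:ℝ), u ^ (-(1/γ)) * (u - 1))) := by
    refine tendsto_integral_filter_of_dominated_convergence
      (fun u => 2 ^ ρ * u ^ (-ρ) * (u - 1)) ?_ ?_ ?_ ?_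
    · refine Eventually.of_forall fun t => ?_
      exact (((hFmeas.comp (measurable_const_mul t)).div_const _).mul
        (measurable_id.sub measurable_const)).aestronglyMeasurable
    · filter_upwards [eventually_ge_atTop t0] with t ht
      rw [ae_restrict_iff' measurableSet_Ioi]
      refine ae_of_all _ fun u hu => ?_
      have hu1 : (1:ℝ) < u := hu
      have hFt : 0 < Fbar t := hFpos' t ht
      have hbnd := potter t ht u hu1.le
      have hnn : 0 ≤ Fbar (t*u)/Fbar t * (u - 1) :=
        mul_nonneg (div_nonneg (hFnn _) hFt.le) (by linarith)
      rw [Real.norm_eq_abs, abs_of_nonneg hnn]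
      exact mul_le_mul_of_nonneg_right ((div_le_iff₀ hFt).mpr hbnd) (by linarith)
    · have h1 : (1 - ρ : ℝ) < -1 := by linarith
      have h2' : (-ρ : ℝ) < -1 := by linarith
      have hint : IntegrableOn (fun u : ℝ => 2 ^ ρ * (u ^ (1 - ρ) - u ^ (-ρ))) (Ioi (1:ℝ)) := by
        have := ((integrableOn_Ioi_rpow_of_lt h1 one_pos).sub
          (integrableOn_Ioi_rpow_of_lt h2' one_pos)).const_mul ((2:ℝ) ^ ρ)
        simpa [IntegrableOn] using this
      refine MeasureTheory.IntegrableOn.congr_fun hint (fun u hu => ?_) measurableSet_Ioi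
      have hu0 : (0:ℝ) < u := lt_trans one_pos hu
      have : u ^ (1 - ρ) = u ^ (-ρ) * u := by
        rw [show (1 - ρ : ℝ) = -ρ + 1 by ring, Real.rpow_add hu0, Real.rpow_one]
      rw [this]; ring
    · rw [ae_restrict_iff' measurableSet_Ioi]
      refine ae_of_all _ fun u hu => ?_
      exact (hRV u (lt_trans one_pos hu)).mul_const (u - 1)
  have hmain : Tendsto (fun t : ℝ => (∫ ω, (max (X ω - t) 0) ^ 2 ∂μ) / (t ^ 2 * Fbar t))
      atTop (nhds (2 * γ ^ 2 / ((1 - 2 * γ) * (1 - γ)))) := by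
    have h2I := hDCT.const_mul (2:ℝ)
    rw [my_I_val ⟨hγ0, hγ2⟩] at h2I
    have hval : 2 * (γ^2/((1-2*γ)*(1-γ))) = 2 * γ ^ 2 / ((1 - 2 * γ) * (1 - γ)) := by ring
    rw [hval] at h2I
    exact Tendsto.congr' hid h2I
  exact hmain.comp he
end

section
/- Assume the tail quantile function U of X is regularly varying with index γ ∈ (0,1/2), and the expectile satisfies e_τ/q_τ → (γ^{−1}−1)^{−γ} and F̄(e_τ)/(1−τ) → γ^{−1}−1 as τ → 1, where q_τ = U(1/(1−τ)). Then dev_τ(X)/q_τ → β_γ as τ → 1, where β_γ = (γ^{−1}−1)^{−γ}/sqrt(1−2γ). (First-order asymptotic expansion of the deviatile.) -/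
open MeasureTheory Set Filter


lemma aux_doubling_unbounded {U : ℝ → ℝ} {γ : ℝ} (hγ : 0 < γ)
    (hU2 : Tendsto (fun t : ℝ => U (t * 2) / U t) atTop (nhds ((2:ℝ) ^ γ)))
    (hUnn : ∀ t : ℝ, 1 < t → 0 ≤ U t) :
    ∀ M : ℝ, ∃ t : ℝ, 1 < t ∧ M < U t := by
  have h2 : (1:ℝ) < 2 ^ γ := by
    rw [Real.one_lt_rpow_iff_of_pos (by norm_num)]
    exact Or.inl ⟨by norm_num, hγ⟩
  set c : ℝ := (1 + 2 ^ γ) / 2 with hc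
  have hc1 : 1 < c := by rw [hc]; linarith
  have hc2 : c < 2 ^ γ := by rw [hc]; linarith
  have hev : ∀ᶠ t : ℝ in atTop, c < U (t * 2) / U t :=
    hU2.eventually (eventually_gt_nhds hc2)
  obtain ⟨T0, hT0⟩ := eventually_atTop.mp hev
  set T : ℝ := max T0 2 with hT
  have hT1 : (1:ℝ) < T := lt_of_lt_of_le (by norm_num) (le_max_right _ _)
  have hstep : ∀ t : ℝ, T ≤ t → 0 < U t ∧ c * U t < U (t * 2) := by
    intro t ht
    have h1t : 1 < t := lt_of_lt_of_le hT1 ht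
    have hct : c < U (t * 2) / U t := hT0 t (le_trans (le_max_left _ _) ht)
    have hUt : 0 < U t := by
      rcases lt_or_eq_of_le (hUnn t h1t) with h | h
      · exact h
      · exfalso; rw [← h, div_zero] at hct; linarith
    exact ⟨hUt, (lt_div_iff₀ hUt).mp hct⟩
  have hTpos : 0 < U T := (hstep T le_rfl).1
  have hind : ∀ n : ℕ, c ^ n * U T ≤ U (T * 2 ^ n) := by
    intro n
    induction n with
    | zero => simp
    | succ n ih =>
      have hTn : T ≤ T * 2 ^ n := by
        nth_rewrite 1 [← mul_one T]
        apply mul_le_mul_of_nonneg_left _ (by linarith)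
        exact one_le_pow₀ (by norm_num)
      have := (hstep _ hTn).2
      have h2n : T * 2 ^ (n + 1) = (T * 2 ^ n) * 2 := by ring
      rw [h2n, pow_succ]
      calc c ^ n * c * U T = c * (c ^ n * U T) := by ring
        _ ≤ c * U (T * 2 ^ n) := by
            apply mul_le_mul_of_nonneg_left ih (by linarith)
        _ ≤ U (T * 2 ^ n * 2) := this.le
  intro M
  obtain ⟨n, hn⟩ := pow_unbounded_of_one_lt (M / U T) hc1
  refine ⟨T * 2 ^ n, ?_, ?_⟩
  · have : (1:ℝ) ≤ 2 ^ n := one_le_pow₀ (by norm_num)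
    nlinarith
  · have : M / U T * U T < c ^ n * U T := by
      apply mul_lt_mul_of_pos_right hn hTpos
    rw [div_mul_cancel₀ _ hTpos.ne'] at this
    exact lt_of_lt_of_le this (hind n)


section structural
variable {Fbar U : ℝ → ℝ} {γ : ℝ}

lemma S_subset_Ici (hneg : ∀ x : ℝ, x < 0 → Fbar x = 1)
    {t : ℝ} (ht : 1 < t) : {x : ℝ | 1 / Fbar x ≥ t} ⊆ Ici 0 := by
  intro x hx
  by_contra hx0
  rw [mem_Ici, not_le] at hx0
  rw [mem_setOf_eq, hneg x hx0] at hx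
  norm_num at hx
  linarith

lemma U_nonneg (hneg : ∀ x : ℝ, x < 0 → Fbar x = 1)
    (hUq : ∀ t : ℝ, U t = sInf {x : ℝ | 1 / Fbar x ≥ t}) :
    ∀ t : ℝ, 1 < t → 0 ≤ U t := by
  intro t ht
  rw [hUq t]
  rcases eq_empty_or_nonempty {x : ℝ | 1 / Fbar x ≥ t} with h | h
  · rw [h, Real.sInf_empty]
  · exact le_csInf h (fun x hx => S_subset_Ici hneg ht hx)

lemma fbar_pos (hanti : Antitone Fbar) (hnn : ∀ x : ℝ, 0 ≤ Fbar x)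
    (hneg : ∀ x : ℝ, x < 0 → Fbar x = 1)
    (hUq : ∀ t : ℝ, U t = sInf {x : ℝ | 1 / Fbar x ≥ t})
    (hγ : 0 < γ)
    (hU2 : Tendsto (fun t : ℝ => U (t * 2) / U t) atTop (nhds ((2:ℝ) ^ γ))) :
    ∀ x : ℝ, 0 < Fbar x := by
  by_contra hc
  push_neg at hc
  obtain ⟨x₀, hx₀⟩ := hc
  have hx₀0 : Fbar x₀ = 0 := le_antisymm hx₀ (hnn x₀)
  set b : ℝ := max x₀ 0 with hb
  have hbnd : ∀ t : ℝ, 1 < t → U t ≤ b := by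
    intro t ht
    have hsub : {x : ℝ | 1 / Fbar x ≥ t} ⊆ Iic b := by
      intro x hx
      rw [mem_setOf_eq] at hx
      by_contra hxb
      rw [mem_Iic, not_le] at hxb
      have hxx₀ : x₀ ≤ x := le_trans (le_max_left _ _) hxb.le
      have : Fbar x = 0 :=
        le_antisymm (hx₀0 ▸ hanti hxx₀) (hnn x)
      rw [this] at hx
      norm_num at hx
      linarith
    rw [hUq t]
    rcases eq_empty_or_nonempty {x : ℝ | 1 / Fbar x ≥ t} with h | h
    · rw [h, Real.sInf_empty]; exact le_max_right _ _
    · obtain ⟨y, hy⟩ := h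
      exact csInf_le_of_le ⟨0, fun z hz => S_subset_Ici hneg ht hz⟩ hy (hsub hy)
  obtain ⟨t, ht1, htb⟩ := aux_doubling_unbounded hγ hU2 (U_nonneg hneg hUq) b
  exact absurd (hbnd t ht1) (not_le.mpr htb)

lemma S_nonempty (hpos : ∀ x : ℝ, 0 < Fbar x)
    (h0 : Tendsto Fbar atTop (nhds 0)) {t : ℝ} (ht : 0 < t) :
    {x : ℝ | 1 / Fbar x ≥ t}.Nonempty := by
  have : ∀ᶠ x : ℝ in atTop, Fbar x < 1 / t :=
    h0.eventually (gt_mem_nhds (by positivity))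
  obtain ⟨x, hx⟩ := this.exists
  refine ⟨x, ?_⟩
  rw [mem_setOf_eq, ge_iff_le, le_div_iff₀ (hpos x)]
  have h1 : t * (1 / t) = 1 := by field_simp
  nlinarith [mul_lt_mul_of_pos_left hx ht]

lemma U_monotone (hneg : ∀ x : ℝ, x < 0 → Fbar x = 1)
    (hpos : ∀ x : ℝ, 0 < Fbar x)
    (h0 : Tendsto Fbar atTop (nhds 0))
    (hUq : ∀ t : ℝ, U t = sInf {x : ℝ | 1 / Fbar x ≥ t}) :
    ∀ t₁ t₂ : ℝ, 1 < t₁ → t₁ ≤ t₂ → U t₁ ≤ U t₂ := by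
  intro t₁ t₂ ht₁ h12
  rw [hUq t₁, hUq t₂]
  apply csInf_le_csInf
  · exact ⟨0, fun z hz => S_subset_Ici hneg ht₁ hz⟩
  · exact S_nonempty hpos h0 (by linarith)
  · intro x hx
    rw [mem_setOf_eq] at hx ⊢
    linarith

lemma U_tendsto_atTop (hanti : Antitone Fbar)
    (hneg : ∀ x : ℝ, x < 0 → Fbar x = 1)
    (hpos : ∀ x : ℝ, 0 < Fbar x)
    (h0 : Tendsto Fbar atTop (nhds 0))
    (hUq : ∀ t : ℝ, U t = sInf {x : ℝ | 1 / Fbar x ≥ t})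
    (hγ : 0 < γ)
    (hU2 : Tendsto (fun t : ℝ => U (t * 2) / U t) atTop (nhds ((2:ℝ) ^ γ))) :
    Tendsto U atTop atTop := by
  rw [tendsto_atTop]
  intro M
  obtain ⟨t₀, ht₀1, ht₀⟩ := aux_doubling_unbounded hγ hU2 (U_nonneg hneg hUq) M
  filter_upwards [eventually_ge_atTop t₀] with t ht
  exact le_trans ht₀.le (U_monotone hneg hpos h0 hUq t₀ t ht₀1 ht)

end structural

section inversion
variable {Fbar U : ℝ → ℝ} {γ : ℝ}

lemma le_U_of_lt_fbar (hanti : Antitone Fbar) (hpos : ∀ x : ℝ, 0 < Fbar x)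
    (h0 : Tendsto Fbar atTop (nhds 0))
    (hUq : ∀ t : ℝ, U t = sInf {x : ℝ | 1 / Fbar x ≥ t})
    {t x : ℝ} (ht : 1 < t) (hx : 1 / t < Fbar x) : x ≤ U t := by
  rw [hUq t]
  apply le_csInf (S_nonempty hpos h0 (by linarith))
  intro s hs
  by_contra hsx
  push_neg at hsx
  have h1 : Fbar x ≤ Fbar s := hanti hsx.le
  have hs' : t ≤ 1 / Fbar s := hs
  have h2 : t * Fbar s ≤ 1 := (le_div_iff₀ (hpos s)).mp hs'
  have h3 : Fbar s ≤ 1 / t := by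
    rw [le_div_iff₀ (by linarith : (0:ℝ) < t)]
    nlinarith
  linarith

lemma U_V_le (hneg : ∀ x : ℝ, x < 0 → Fbar x = 1)
    (hUq : ∀ t : ℝ, U t = sInf {x : ℝ | 1 / Fbar x ≥ t})
    {u : ℝ} (h1 : 1 < 1 / Fbar u) : U (1 / Fbar u) ≤ u := by
  rw [hUq]
  exact csInf_le ⟨0, fun z hz => S_subset_Ici hneg h1 hz⟩ (le_refl (1 / Fbar u))

lemma fbar_rv (hanti : Antitone Fbar)
    (hneg : ∀ x : ℝ, x < 0 → Fbar x = 1)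
    (hpos : ∀ x : ℝ, 0 < Fbar x)
    (h0 : Tendsto Fbar atTop (nhds 0))
    (hUq : ∀ t : ℝ, U t = sInf {x : ℝ | 1 / Fbar x ≥ t})
    (hγ : 0 < γ)
    (hU : ∀ x : ℝ, 0 < x → Tendsto (fun t : ℝ => U (t * x) / U t) atTop (nhds (x ^ γ)))
    {y : ℝ} (hy : 1 < y) :
    Tendsto (fun u : ℝ => Fbar (u * y) / Fbar u) atTop (nhds (y ^ (-γ⁻¹))) := by
  have hy0 : (0:ℝ) < y := by linarith
  set m : ℝ := y ^ (γ⁻¹ : ℝ) with hmdef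
  have hm0 : 0 < m := Real.rpow_pos_of_pos hy0 _
  have hm1 : 1 < m := Real.one_lt_rpow_iff_of_pos hy0 |>.2 (Or.inl ⟨hy, by positivity⟩)
  have hmγ : m ^ γ = y := by
    rw [hmdef, ← Real.rpow_mul hy0.le, inv_mul_cancel₀ hγ.ne', Real.rpow_one]
  have hVt : Tendsto (fun u : ℝ => 1 / Fbar u) atTop atTop := by
    simp_rw [one_div]
    exact Tendsto.inv_tendsto_nhdsGT_zero
      (tendsto_nhdsWithin_iff.mpr ⟨h0, Eventually.of_forall (fun u => hpos u)⟩)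
  have hUt : Tendsto U atTop atTop :=
    U_tendsto_atTop hanti hneg hpos h0 hUq hγ (hU 2 (by norm_num))
  have hmy : Tendsto (fun u : ℝ => u * y) atTop atTop :=
    Tendsto.atTop_mul_const hy0 tendsto_id
  have hWt : Tendsto (fun u : ℝ => 1 / Fbar (u * y)) atTop atTop := hVt.comp hmy
  have hVrat : Tendsto (fun u : ℝ => (1 / Fbar (u * y)) / (1 / Fbar u)) atTop (nhds m) := by
    rw [tendsto_order]
    constructor
    · -- lower bound
      intro a ha
      rcases le_or_gt a 0 with ha0 | ha0
      · filter_upwards [eventually_gt_atTop (0:ℝ)] with u hu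
        have : 0 < (1 / Fbar (u * y)) / (1 / Fbar u) :=
          div_pos (one_div_pos.mpr (hpos (u * y))) (one_div_pos.mpr (hpos u))
        linarith
      · set ρ : ℝ := Real.sqrt (m / a) with hρdef
        have hma : 1 < m / a := (one_lt_div ha0).mpr ha
        have hρ1 : 1 < ρ := by
          rw [hρdef, show (1:ℝ) = Real.sqrt 1 by simp]
          exact Real.sqrt_lt_sqrt (by norm_num) hma
        have hρ0 : 0 < ρ := by linarith
        have hρsq : ρ ^ 2 = m / a := Real.sq_sqrt (div_nonneg hm0.le ha0.le)
        have hρa : ρ * a < m := by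
          have h1 : (ρ * a) ^ 2 = m * a := by
            rw [mul_pow, hρsq]; field_simp
          have h2 : (ρ * a) ^ 2 < m ^ 2 := by rw [h1]; nlinarith
          exact lt_of_pow_lt_pow_left₀ 2 hm0.le h2
        have hρa0 : 0 < ρ * a := by positivity
        have hργ : (ρ * a) ^ γ < y := by
          rw [← hmγ]
          exact Real.rpow_lt_rpow hρa0.le hρa hγ
        have hcomp : Tendsto (fun u : ℝ => U ((1 / Fbar u) * (ρ * a)) / U (1 / Fbar u))
            atTop (nhds ((ρ * a) ^ γ)) := (hU (ρ * a) hρa0).comp hVt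
        have hevK : ∀ᶠ u : ℝ in atTop,
            U ((1 / Fbar u) * (ρ * a)) / U (1 / Fbar u) < y :=
          hcomp.eventually (eventually_lt_nhds hργ)
        have hevU1 : ∀ᶠ u : ℝ in atTop, 1 ≤ U (1 / Fbar u) :=
          (hUt.comp hVt).eventually_ge_atTop 1
        have hevρs1 : ∀ᶠ u : ℝ in atTop, 1 < ρ * (1 / Fbar (u * y)) :=
          (hWt.const_mul_atTop hρ0).eventually_gt_atTop 1
        have hevt1 : ∀ᶠ u : ℝ in atTop, 1 < 1 / Fbar u := hVt.eventually_gt_atTop 1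
        have hevtρa1 : ∀ᶠ u : ℝ in atTop, 1 < (1 / Fbar u) * (ρ * a) :=
          (hVt.atTop_mul_const hρa0).eventually_gt_atTop 1
        filter_upwards [hevK, hevU1, hevρs1, hevt1, hevtρa1, eventually_gt_atTop (0:ℝ)]
          with u hK hU1 hρs1 ht1 htρa1 hu
        set t : ℝ := 1 / Fbar u with htdef
        set s : ℝ := 1 / Fbar (u * y) with hsdef
        have ht0 : 0 < t := one_div_pos.mpr (hpos u)
        have hs0 : 0 < s := one_div_pos.mpr (hpos (u * y))
        by_contra hcon
        push_neg at hcon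
        have hsat : s ≤ a * t := by
          rw [div_le_iff₀ ht0] at hcon; linarith
        -- u * y ≤ U (ρ * s)
        have huy : u * y ≤ U (ρ * s) := by
          apply le_U_of_lt_fbar hanti hpos h0 hUq hρs1
          have hFuy : Fbar (u * y) = 1 / s := by rw [hsdef, one_div_one_div]
          rw [hFuy]
          exact one_div_lt_one_div_of_lt hs0 (by nlinarith)
        -- U t ≤ u
        have hUtu : U t ≤ u := U_V_le hneg hUq ht1
        -- monotone step
        have hmono : U (ρ * s) ≤ U (t * (ρ * a)) := by
          apply U_monotone hneg hpos h0 hUq _ _ hρs1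
          calc ρ * s ≤ ρ * (a * t) := mul_le_mul_of_nonneg_left hsat hρ0.le
            _ = t * (ρ * a) := by ring
        have hUt0 : (0:ℝ) < U t := by linarith [hU1]
        have hfinal : y ≤ U (t * (ρ * a)) / U t := by
          rw [le_div_iff₀ hUt0]
          calc y * U t = U t * y := mul_comm _ _
            _ ≤ u * y := mul_le_mul_of_nonneg_right hUtu hy0.le
            _ ≤ U (ρ * s) := huy
            _ ≤ U (t * (ρ * a)) := hmono
        linarith [hK]
    · -- upper bound
      intro b hb
      set ρ : ℝ := Real.sqrt (b / m) with hρdef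
      have hbm : 1 < b / m := (one_lt_div hm0).mpr hb
      have hρ1 : 1 < ρ := by
        rw [hρdef, show (1:ℝ) = Real.sqrt 1 by simp]
        exact Real.sqrt_lt_sqrt (by norm_num) hbm
      have hρ0 : 0 < ρ := by linarith
      have hb0 : 0 < b := by linarith
      have hρsq : ρ ^ 2 = b / m := Real.sq_sqrt (div_nonneg hb0.le hm0.le)
      set K : ℝ := b / ρ with hKdef
      have hK0 : 0 < K := by positivity
      have hmK : m < K := by
        rw [hKdef, lt_div_iff₀ hρ0]
        have h1 : (m * ρ) ^ 2 = m * b := by rw [mul_pow, hρsq]; field_simp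
        have h2 : (m * ρ) ^ 2 < b ^ 2 := by rw [h1]; nlinarith
        exact lt_of_pow_lt_pow_left₀ 2 hb0.le h2
      have hKρb : ρ * K = b := by rw [hKdef]; field_simp
      have hKγ : y < K ^ γ := by
        rw [← hmγ]
        exact Real.rpow_lt_rpow hm0.le hmK hγ
      have hinner : Tendsto (fun u : ℝ => ρ * (1 / Fbar u)) atTop atTop :=
        hVt.const_mul_atTop hρ0
      have hcomp : Tendsto (fun u : ℝ => U ((ρ * (1 / Fbar u)) * K) / U (ρ * (1 / Fbar u)))
          atTop (nhds (K ^ γ)) := (hU K hK0).comp hinner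
      have hevK : ∀ᶠ u : ℝ in atTop,
          y < U ((ρ * (1 / Fbar u)) * K) / U (ρ * (1 / Fbar u)) :=
        hcomp.eventually (eventually_gt_nhds hKγ)
      have hevU1 : ∀ᶠ u : ℝ in atTop, 1 ≤ U (ρ * (1 / Fbar u)) :=
        (hUt.comp hinner).eventually_ge_atTop 1
      have hevρt1 : ∀ᶠ u : ℝ in atTop, 1 < ρ * (1 / Fbar u) :=
        hinner.eventually_gt_atTop 1
      have hevρtK1 : ∀ᶠ u : ℝ in atTop, 1 < (ρ * (1 / Fbar u)) * K :=
        (hinner.atTop_mul_const hK0).eventually_gt_atTop 1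
      have hevs1 : ∀ᶠ u : ℝ in atTop, 1 < 1 / Fbar (u * y) := hWt.eventually_gt_atTop 1
      filter_upwards [hevK, hevU1, hevρt1, hevρtK1, hevs1, eventually_gt_atTop (0:ℝ)]
        with u hK' hU1 hρt1 hρtK1 hs1 hu
      set t : ℝ := 1 / Fbar u with htdef
      set s : ℝ := 1 / Fbar (u * y) with hsdef
      have ht0 : 0 < t := one_div_pos.mpr (hpos u)
      have hs0 : 0 < s := one_div_pos.mpr (hpos (u * y))
      by_contra hcon
      push_neg at hcon
      have hbts : b * t ≤ s := by
        rw [le_div_iff₀ ht0] at hcon; linarith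
      -- u ≤ U (ρ * t)
      have hu_le : u ≤ U (ρ * t) := by
        apply le_U_of_lt_fbar hanti hpos h0 hUq hρt1
        have hFu : Fbar u = 1 / t := by rw [htdef, one_div_one_div]
        rw [hFu]
        exact one_div_lt_one_div_of_lt ht0 (by nlinarith)
      -- U s ≤ u * y
      have hUs : U s ≤ u * y := U_V_le hneg hUq hs1
      have hmono : U ((ρ * t) * K) ≤ U s := by
        apply U_monotone hneg hpos h0 hUq _ _ hρtK1
        calc (ρ * t) * K = (ρ * K) * t := by ring
          _ = b * t := by rw [hKρb]
          _ ≤ s := hbts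
      have hUρt0 : (0:ℝ) < U (ρ * t) := by linarith [hU1]
      have hfinal : U ((ρ * t) * K) / U (ρ * t) ≤ y := by
        rw [div_le_iff₀ hUρt0]
        calc U ((ρ * t) * K) ≤ U s := hmono
          _ ≤ u * y := hUs
          _ ≤ U (ρ * t) * y := mul_le_mul_of_nonneg_right hu_le hy0.le
          _ = y * U (ρ * t) := mul_comm _ _
      linarith [hK']
  have hgoal : Tendsto (fun u : ℝ => ((1 / Fbar (u * y)) / (1 / Fbar u))⁻¹) atTop
      (nhds m⁻¹) := hVrat.inv₀ (by positivity)
  have heq : (fun u : ℝ => ((1 / Fbar (u * y)) / (1 / Fbar u))⁻¹) =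
      (fun u : ℝ => Fbar (u * y) / Fbar u) := by
    funext u
    have hA := (hpos (u * y)).ne'
    have hB := (hpos u).ne'
    field_simp
  rw [heq] at hgoal
  have hminv : m⁻¹ = y ^ (-γ⁻¹ : ℝ) := by
    rw [hmdef, ← Real.rpow_neg hy0.le]
  rwa [hminv] at hgoal

end inversion

section potter
variable {Fbar : ℝ → ℝ}

lemma potter_bound (hanti : Antitone Fbar) (hpos : ∀ x : ℝ, 0 < Fbar x)
    {β : ℝ} (hβ : 0 < β)
    (hdbl : ∀ᶠ u : ℝ in atTop, Fbar (u * 2) ≤ 2 ^ (-β : ℝ) * Fbar u) :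
    ∃ T : ℝ, 0 < T ∧ ∀ u ≥ T, ∀ y ≥ (1:ℝ),
      Fbar (u * y) ≤ 2 ^ (β : ℝ) * y ^ (-β : ℝ) * Fbar u := by
  obtain ⟨T0, hT0⟩ := eventually_atTop.mp hdbl
  set T : ℝ := max T0 1 with hT
  have hT1 : (1:ℝ) ≤ T := le_max_right _ _
  have hTpos : (0:ℝ) < T := by linarith
  have hiter : ∀ n : ℕ, ∀ u : ℝ, T ≤ u →
      Fbar (u * 2 ^ n) ≤ ((2:ℝ) ^ (-β : ℝ)) ^ n * Fbar u := by
    intro n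
    induction n with
    | zero => intro u hu; simp
    | succ n ih =>
      intro u hu
      have hu0 : 0 < u := lt_of_lt_of_le hTpos hu
      have h2n : (1:ℝ) ≤ 2 ^ n := one_le_pow₀ (by norm_num)
      have hun : T ≤ u * 2 ^ n := le_trans hu (le_mul_of_one_le_right hu0.le h2n)
      have heq : u * 2 ^ (n + 1) = (u * 2 ^ n) * 2 := by ring
      rw [heq]
      calc Fbar ((u * 2 ^ n) * 2) ≤ 2 ^ (-β : ℝ) * Fbar (u * 2 ^ n) :=
            hT0 _ (le_trans (le_max_left _ _) hun)
        _ ≤ 2 ^ (-β : ℝ) * (((2:ℝ) ^ (-β : ℝ)) ^ n * Fbar u) :=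
            mul_le_mul_of_nonneg_left (ih u hu) (Real.rpow_nonneg (by norm_num) _)
        _ = ((2:ℝ) ^ (-β : ℝ)) ^ (n + 1) * Fbar u := by ring
  refine ⟨T, hTpos, ?_⟩
  intro u hu y hy
  have hy0 : (0:ℝ) < y := by linarith
  have hu0 : 0 < u := lt_of_lt_of_le hTpos hu
  set n : ℕ := ⌊Real.logb 2 y⌋₊ with hn
  have hlogb : (0:ℝ) ≤ Real.logb 2 y := Real.logb_nonneg (by norm_num) hy
  have hn1 : (2:ℝ) ^ (n : ℝ) ≤ y := by
    have h1 : (n : ℝ) ≤ Real.logb 2 y := Nat.floor_le hlogb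
    calc (2:ℝ) ^ (n : ℝ) ≤ (2:ℝ) ^ Real.logb 2 y :=
          Real.rpow_le_rpow_of_exponent_le (by norm_num) h1
      _ = y := Real.rpow_logb (by norm_num) (by norm_num) hy0
  have hn2 : y < (2:ℝ) ^ ((n : ℝ) + 1) := by
    have h1 : Real.logb 2 y < (n : ℝ) + 1 := Nat.lt_floor_add_one _
    calc y = (2:ℝ) ^ Real.logb 2 y := (Real.rpow_logb (by norm_num) (by norm_num) hy0).symm
      _ < (2:ℝ) ^ ((n : ℝ) + 1) :=
          Real.rpow_lt_rpow_of_exponent_lt (by norm_num) h1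
  have hstep1 : Fbar (u * y) ≤ Fbar (u * 2 ^ n) := by
    apply hanti
    apply mul_le_mul_of_nonneg_left _ hu0.le
    rw [← Real.rpow_natCast 2 n]
    exact hn1
  have hstep2 : Fbar (u * 2 ^ n) ≤ ((2:ℝ) ^ (-β : ℝ)) ^ n * Fbar u := hiter n u hu
  have hpow : ((2:ℝ) ^ (-β : ℝ)) ^ n ≤ 2 ^ (β : ℝ) * y ^ (-β : ℝ) := by
    have h1 : ((2:ℝ) ^ (-β : ℝ)) ^ n = (2:ℝ) ^ ((-β) * n) := by
      rw [Real.rpow_mul (by norm_num), Real.rpow_natCast]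
    have h2 : ((2:ℝ) ^ ((n:ℝ) + 1)) ^ (-β : ℝ) < y ^ (-β : ℝ) :=
      Real.rpow_lt_rpow_of_neg hy0 hn2 (by linarith)
    have h3 : ((2:ℝ) ^ ((n:ℝ) + 1)) ^ (-β : ℝ) = (2:ℝ) ^ (((n:ℝ) + 1) * (-β)) := by
      rw [← Real.rpow_mul (by norm_num)]
    have h4 : (2:ℝ) ^ (β:ℝ) * (2:ℝ) ^ (((n:ℝ) + 1) * (-β)) = (2:ℝ) ^ ((-β) * n) := by
      rw [← Real.rpow_add (by norm_num)]
      ring_nf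
    rw [h1, ← h4]
    have h5 : (0:ℝ) < (2:ℝ) ^ (β:ℝ) := Real.rpow_pos_of_pos (by norm_num) _
    rw [h3] at h2
    exact mul_le_mul_of_nonneg_left h2.le h5.le
  calc Fbar (u * y) ≤ ((2:ℝ) ^ (-β : ℝ)) ^ n * Fbar u := le_trans hstep1 hstep2
    _ ≤ 2 ^ (β : ℝ) * y ^ (-β : ℝ) * Fbar u :=
        mul_le_mul_of_nonneg_right hpow (hpos u).le

end potter

section karamata
variable {Fbar : ℝ → ℝ}

lemma karamata_tail (hanti : Antitone Fbar) (hpos : ∀ x : ℝ, 0 < Fbar x)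
    {α : ℝ} (hα : 2 < α)
    (hrv : ∀ y : ℝ, 1 < y →
      Tendsto (fun u : ℝ => Fbar (u * y) / Fbar u) atTop (nhds (y ^ (-α : ℝ))))
    {T C β : ℝ} (hT : 0 < T) (hC : 0 < C) (hβ2 : 2 < β)
    (hpot : ∀ u ≥ T, ∀ y ≥ (1:ℝ), Fbar (u * y) ≤ C * y ^ (-β : ℝ) * Fbar u) :
    Tendsto (fun u : ℝ => (∫ y in Set.Ioi (1:ℝ), (y - 1) * Fbar (u * y)) / Fbar u) atTop
      (nhds ((α - 2)⁻¹ - (α - 1)⁻¹)) := by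
  have hFmeas : Measurable Fbar := hanti.measurable
  -- dominated convergence
  have hDCT : Tendsto (fun u : ℝ => ∫ y in Set.Ioi (1:ℝ), (y - 1) * (Fbar (u * y) / Fbar u))
      atTop (nhds (∫ y in Set.Ioi (1:ℝ), (y - 1) * y ^ (-α : ℝ))) := by
    apply MeasureTheory.tendsto_integral_filter_of_dominated_convergence
      (bound := fun y : ℝ => C * y ^ ((1:ℝ) - β))
    · filter_upwards with u
      apply Measurable.aestronglyMeasurable
      exact (measurable_id.sub_const 1).mul
        ((hFmeas.comp (measurable_const_mul u)).div_const _)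
    · filter_upwards [eventually_ge_atTop T] with u hu
      rw [MeasureTheory.ae_restrict_iff' measurableSet_Ioi]
      filter_upwards with y hy
      have hy1 : (1:ℝ) < y := hy
      have hy0 : (0:ℝ) < y := by linarith
      have hratio : 0 ≤ Fbar (u * y) / Fbar u := (div_pos (hpos _) (hpos _)).le
      have hub : Fbar (u * y) / Fbar u ≤ C * y ^ (-β : ℝ) := by
        rw [div_le_iff₀ (hpos u)]
        exact hpot u hu y hy1.le
      rw [Real.norm_eq_abs, abs_of_nonneg (mul_nonneg (by linarith) hratio)]
      calc (y - 1) * (Fbar (u * y) / Fbar u) ≤ y * (C * y ^ (-β : ℝ)) :=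
            mul_le_mul (by linarith) hub hratio hy0.le
        _ = C * y ^ ((1:ℝ) - β) := by
            rw [sub_eq_add_neg, Real.rpow_add hy0, Real.rpow_one]; ring
    · exact (integrableOn_Ioi_rpow_of_lt (by linarith) zero_lt_one).const_mul C
    · rw [MeasureTheory.ae_restrict_iff' measurableSet_Ioi]
      filter_upwards with y hy
      exact (hrv y hy).const_mul (y - 1)
  -- identify the function
  have hfeq : ∀ u : ℝ, (∫ y in Set.Ioi (1:ℝ), (y - 1) * (Fbar (u * y) / Fbar u))
      = (∫ y in Set.Ioi (1:ℝ), (y - 1) * Fbar (u * y)) / Fbar u := by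
    intro u
    rw [← MeasureTheory.integral_div]
    congr 1
    funext y
    rw [mul_div_assoc]
  -- identify the limit
  have hlim : (∫ y in Set.Ioi (1:ℝ), (y - 1) * y ^ (-α : ℝ))
      = (α - 2)⁻¹ - (α - 1)⁻¹ := by
    have hcongr : ∫ y in Set.Ioi (1:ℝ), (y - 1) * y ^ (-α : ℝ)
        = ∫ y in Set.Ioi (1:ℝ), (y ^ ((1:ℝ) - α) - y ^ (-α : ℝ)) := by
      apply MeasureTheory.setIntegral_congr_fun measurableSet_Ioi
      intro y hy
      have hy0 : (0:ℝ) < y := lt_trans zero_lt_one hy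
      simp only
      rw [sub_eq_add_neg (1:ℝ) α, Real.rpow_add hy0, Real.rpow_one]
      ring
    rw [hcongr, MeasureTheory.integral_sub
      (integrableOn_Ioi_rpow_of_lt (by linarith) zero_lt_one)
      (integrableOn_Ioi_rpow_of_lt (by linarith) zero_lt_one)]
    rw [integral_Ioi_rpow_of_lt (by linarith) zero_lt_one,
      integral_Ioi_rpow_of_lt (by linarith) zero_lt_one]
    rw [Real.one_rpow, Real.one_rpow]
    have h2 : α - 2 ≠ 0 := by intro h; rw [sub_eq_zero] at h; rw [h] at hα; linarith
    have h1 : α - 1 ≠ 0 := by intro h; rw [sub_eq_zero] at h; rw [h] at hα; linarith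
    have h2' : (2:ℝ) - α ≠ 0 := fun h => h2 (by linarith [sub_eq_zero.mp h])
    have h1' : (1:ℝ) - α ≠ 0 := fun h => h1 (by linarith [sub_eq_zero.mp h])
    rw [show (1:ℝ) - α + 1 = 2 - α by ring, show -α + 1 = 1 - α by ring]
    rw [div_eq_mul_inv, div_eq_mul_inv]
    rw [show (α - 2)⁻¹ = -(2 - α)⁻¹ by rw [neg_inv]; congr 1; ring,
        show (α - 1)⁻¹ = -(1 - α)⁻¹ by rw [neg_inv]; congr 1; ring]
    ring
  rw [hlim] at hDCT
  exact hDCT.congr (fun u => hfeq u)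
end karamata

section layercake

lemma integral_Ioi_comp_add (f : ℝ → ℝ) (a u : ℝ) :
    ∫ x in Set.Ioi a, f (x + u) = ∫ z in Set.Ioi (a + u), f z := by
  rw [← MeasureTheory.integral_indicator measurableSet_Ioi,
      ← MeasureTheory.integral_indicator measurableSet_Ioi]
  have hind : (fun x : ℝ => (Set.Ioi a).indicator (fun x => f (x + u)) x)
      = (fun x : ℝ => (Set.Ioi (a + u)).indicator f (x + u)) := by
    funext x
    by_cases h : x ∈ Set.Ioi a
    · rw [Set.indicator_of_mem h, Set.indicator_of_mem]
      rw [Set.mem_Ioi] at h ⊢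
      linarith
    · rw [Set.indicator_of_notMem h, Set.indicator_of_notMem]
      rw [Set.mem_Ioi] at h ⊢
      intro hc
      exact h (by linarith)
  rw [hind]
  exact MeasureTheory.integral_add_right_eq_self ((Set.Ioi (a + u)).indicator f) u

lemma tail_sq_eq {Ω : Type*} [MeasureSpace Ω] (μ : Measure Ω) [IsProbabilityMeasure μ]
    (X : Ω → ℝ) (hX : MemLp X 2 μ)
    (Fbar : ℝ → ℝ) (hFbar : ∀ x : ℝ, Fbar x = (μ {ω | x < X ω}).toReal)
    {u : ℝ} (hu : 0 < u) :
    ∫ ω, (max (X ω - u) 0) ^ 2 ∂μ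
      = 2 * u ^ 2 * ∫ y in Set.Ioi (1:ℝ), (y - 1) * Fbar (u * y) := by
  have hXu : MemLp (fun ω => X ω - u) 2 μ := hX.sub (memLp_const u)
  have hmax_meas : AEStronglyMeasurable (fun ω => max (X ω - u) 0) μ :=
    (hX.aestronglyMeasurable.sub aestronglyMeasurable_const).sup aestronglyMeasurable_const
  have hint : Integrable (fun ω => (max (X ω - u) 0) ^ 2) μ := by
    apply hXu.integrable_sq.mono
    · have h2 : (fun ω => (max (X ω - u) 0) ^ 2)
          = fun ω => (max (X ω - u) 0) * (max (X ω - u) 0) := by funext ω; ring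
      rw [h2]
      exact hmax_meas.mul hmax_meas
    · filter_upwards with ω
      rw [Real.norm_eq_abs, Real.norm_eq_abs, abs_of_nonneg (sq_nonneg _), abs_of_nonneg (sq_nonneg _)]
      rcases le_or_gt (X ω - u) 0 with h | h
      · rw [max_eq_right h]; simpa using sq_nonneg (X ω - u)
      · rw [max_eq_left h.le]
  rw [hint.integral_eq_integral_meas_lt (Filter.Eventually.of_forall (fun ω => by positivity))]
  have hcongr1 : ∫ t in Set.Ioi (0:ℝ), (μ {a | t < (max (X a - u) 0) ^ 2}).toReal
      = ∫ t in Set.Ioi (0:ℝ), Fbar (u + Real.sqrt t) := by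
    apply MeasureTheory.setIntegral_congr_fun measurableSet_Ioi
    intro t ht
    rw [Set.mem_Ioi] at ht
    have hset : {a | t < (max (X a - u) 0) ^ 2} = {ω | u + Real.sqrt t < X ω} := by
      ext ω
      simp only [Set.mem_setOf_eq]
      constructor
      · intro h
        by_contra hc
        push_neg at hc
        have hz : X ω - u ≤ Real.sqrt t := by linarith
        have hm : max (X ω - u) 0 ≤ Real.sqrt t := max_le hz (Real.sqrt_nonneg t)
        have := pow_le_pow_left₀ (le_max_right _ _) hm 2
        rw [Real.sq_sqrt ht.le] at this
        linarith
      · intro h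
        have hz : Real.sqrt t < X ω - u := by linarith
        have h0 : 0 < Real.sqrt t := Real.sqrt_pos.mpr ht
        rw [max_eq_left (by linarith : (0:ℝ) ≤ X ω - u)]
        have := pow_lt_pow_left₀ hz (Real.sqrt_nonneg t) two_ne_zero
        rwa [Real.sq_sqrt ht.le] at this
    dsimp only
    rw [hset, ← hFbar]
  simp only [measureReal_def]
  rw [hcongr1]
  -- substitution t = x^2
  have hsub1 : ∫ t in Set.Ioi (0:ℝ), Fbar (u + Real.sqrt t)
      = ∫ x in Set.Ioi (0:ℝ), 2 * x * Fbar (u + x) := by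
    rw [← integral_comp_rpow_Ioi_of_pos (g := fun t => Fbar (u + Real.sqrt t)) (p := 2) (by norm_num)]
    apply MeasureTheory.setIntegral_congr_fun measurableSet_Ioi
    intro x hx
    rw [Set.mem_Ioi] at hx
    have h1 : x ^ ((2:ℝ) - 1) = x := by norm_num
    have h2 : Real.sqrt (x ^ (2:ℝ)) = x := by
      rw [show x ^ (2:ℝ) = x ^ (2:ℕ) by rw [← Real.rpow_natCast x 2]; norm_num]
      exact Real.sqrt_sq hx.le
    simp only [h1, h2, smul_eq_mul]
  rw [hsub1]
  -- shift x = z - u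
  set f : ℝ → ℝ := fun z => 2 * (z - u) * Fbar z with hf
  have hshift : ∫ x in Set.Ioi (0:ℝ), 2 * x * Fbar (u + x) = ∫ z in Set.Ioi u, f z := by
    have h1 : (fun x : ℝ => 2 * x * Fbar (u + x)) = (fun x : ℝ => f (x + u)) := by
      funext x
      rw [hf]
      simp only
      rw [add_sub_cancel_right, add_comm u x]
    rw [h1, integral_Ioi_comp_add f 0 u, zero_add]
  rw [hshift]
  -- scale z = u * y
  have hscale : ∫ y in Set.Ioi (1:ℝ), f (u * y) = u⁻¹ • ∫ z in Set.Ioi (u * 1), f z :=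
    MeasureTheory.integral_comp_mul_left_Ioi f 1 hu
  rw [mul_one] at hscale
  have hIoiu : ∫ z in Set.Ioi u, f z = u * ∫ y in Set.Ioi (1:ℝ), f (u * y) := by
    rw [hscale, smul_eq_mul, ← mul_assoc, mul_inv_cancel₀ hu.ne', one_mul]
  rw [hIoiu]
  have hlast : ∫ y in Set.Ioi (1:ℝ), f (u * y)
      = (2 * u) * ∫ y in Set.Ioi (1:ℝ), (y - 1) * Fbar (u * y) := by
    rw [← MeasureTheory.integral_const_mul]
    apply MeasureTheory.setIntegral_congr_fun measurableSet_Ioi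
    intro y hy
    rw [hf]
    simp only
    ring
  rw [hlast]
  ring

end layercake

section secondmoment

lemma second_moment_tendsto {Ω : Type*} [MeasureSpace Ω] (μ : Measure Ω) [IsProbabilityMeasure μ]
    (X : Ω → ℝ) (hX : MemLp X 2 μ) :
    Tendsto (fun u : ℝ => (∫ ω, (X ω - u) ^ 2 ∂μ) / u ^ 2) atTop (nhds 1) := by
  have hint2 : Integrable (fun ω => X ω ^ 2) μ := hX.integrable_sq
  have hint1 : Integrable X μ := hX.integrable (by norm_num)
  set A : ℝ := ∫ ω, X ω ^ 2 ∂μ with hA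
  set B : ℝ := ∫ ω, X ω ∂μ with hB
  have hexp : ∀ u : ℝ, (∫ ω, (X ω - u) ^ 2 ∂μ) = A - 2 * u * B + u ^ 2 := by
    intro u
    have h1 : (fun ω => (X ω - u) ^ 2)
        = fun ω => (X ω ^ 2 - (2 * u) * X ω) + u ^ 2 := by funext ω; ring
    have hsub : Integrable (fun ω => X ω ^ 2 - 2 * u * X ω) μ :=
      hint2.sub (hint1.const_mul (2 * u))
    have hcm : Integrable (fun ω => 2 * u * X ω) μ := hint1.const_mul (2 * u)
    rw [h1, MeasureTheory.integral_add hsub (MeasureTheory.integrable_const _),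
      MeasureTheory.integral_sub hint2 hcm,
      MeasureTheory.integral_const_mul, MeasureTheory.integral_const]
    simp [measure_univ]
    rfl
  have hlim : Tendsto (fun u : ℝ => A / u ^ 2 - 2 * B / u + 1) atTop (nhds 1) := by
    have h1 : Tendsto (fun u : ℝ => A / u ^ 2) atTop (nhds 0) := by
      have h := (tendsto_inv_atTop_zero.const_mul A).mul tendsto_inv_atTop_zero
      simp only [mul_zero] at h
      exact h.congr (fun u => by ring)
    have h2 : Tendsto (fun u : ℝ => 2 * B / u) atTop (nhds 0) := by
      have h := tendsto_inv_atTop_zero.const_mul (2 * B)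
      simp only [mul_zero] at h
      exact h.congr (fun u => by ring)
    have := (h1.sub h2).add (tendsto_const_nhds (x := (1:ℝ)))
    simpa using this
  apply hlim.congr'
  filter_upwards [eventually_gt_atTop (0:ℝ)] with u hu
  rw [hexp u]
  field_simp

end secondmoment

section fbarbasic

lemma fbar_basics {Ω : Type*} [MeasureSpace Ω] (μ : Measure Ω) [IsProbabilityMeasure μ]
    (X : Ω → ℝ) (hX : MemLp X 2 μ)
    (Fbar : ℝ → ℝ) (hFbar : ∀ x : ℝ, Fbar x = (μ {ω | x < X ω}).toReal) :
    Antitone Fbar ∧ (∀ x : ℝ, 0 ≤ Fbar x) ∧ Tendsto Fbar atTop (nhds 0) ∧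
      (∀ x y : ℝ, (∀ z : ℝ, x < z → Fbar z ≤ y) → Fbar x ≤ y) := by
  have hanti : Antitone Fbar := by
    intro x₁ x₂ h
    rw [hFbar, hFbar]
    exact ENNReal.toReal_mono (measure_ne_top μ _)
      (measure_mono (fun ω hω => lt_of_le_of_lt h hω))
  have hnn : ∀ x : ℝ, 0 ≤ Fbar x := fun x => by rw [hFbar]; exact ENNReal.toReal_nonneg
  obtain ⟨g, hgmeas, hXg⟩ : ∃ g : Ω → ℝ, Measurable g ∧ X =ᵐ[μ] g :=
    ⟨hX.aestronglyMeasurable.aemeasurable.mk X,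
      hX.aestronglyMeasurable.aemeasurable.measurable_mk,
      hX.aestronglyMeasurable.aemeasurable.ae_eq_mk⟩
  have hFg : ∀ x : ℝ, μ {ω | x < X ω} = μ {ω | x < g ω} := by
    intro x
    refine measure_congr (hXg.mono fun ω hω => ?_)
    show (x < X ω) = (x < g ω)
    rw [hω]
  have h0 : Tendsto Fbar atTop (nhds 0) := by
    have hseq : Tendsto (fun n : ℕ => μ {ω | (n:ℝ) < g ω}) atTop
        (nhds (μ (⋂ n : ℕ, {ω | (n:ℝ) < g ω}))) := by
      apply tendsto_measure_iInter_atTop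
      · exact fun n => (measurableSet_lt measurable_const hgmeas).nullMeasurableSet
      · intro n m hnm ω hω
        simp only [Set.mem_setOf_eq] at hω ⊢
        exact lt_of_le_of_lt (by exact_mod_cast hnm) hω
      · exact ⟨0, measure_ne_top μ _⟩
    have hempty : (⋂ n : ℕ, {ω | (n:ℝ) < g ω}) = ∅ := by
      ext ω
      simp only [Set.mem_iInter, Set.mem_setOf_eq, Set.mem_empty_iff_false, iff_false, not_forall,
        not_lt]
      obtain ⟨n, hn⟩ := exists_nat_ge (g ω)
      exact ⟨n, hn⟩
    rw [hempty, measure_empty] at hseq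
    have hseq' : Tendsto (fun n : ℕ => Fbar n) atTop (nhds 0) := by
      have h := (ENNReal.tendsto_toReal (by simp : (0:ENNReal) ≠ ⊤)).comp hseq
      simp only [ENNReal.toReal_zero] at h
      apply h.congr
      intro n
      simp only [Function.comp_apply]
      rw [hFbar, hFg]
    rw [tendsto_order]
    constructor
    · intro a ha
      filter_upwards with x
      exact lt_of_lt_of_le ha (hnn x)
    · intro b hb
      obtain ⟨n, hn⟩ := (hseq'.eventually (eventually_lt_nhds hb)).exists
      filter_upwards [eventually_ge_atTop (n:ℝ)] with x hx
      exact lt_of_le_of_lt (hanti hx) hn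
  have hrc : ∀ x y : ℝ, (∀ z : ℝ, x < z → Fbar z ≤ y) → Fbar x ≤ y := by
    intro x y hz
    have hmono : Monotone (fun n : ℕ => {ω | x + 1/((n:ℝ)+1) < g ω}) := by
      intro n m hnm ω hω
      simp only [Set.mem_setOf_eq] at hω ⊢
      have h1 : 1/((m:ℝ)+1) ≤ 1/((n:ℝ)+1) := by
        apply one_div_le_one_div_of_le (by positivity)
        exact_mod_cast Nat.succ_le_succ hnm
      linarith
    have hseq := tendsto_measure_iUnion_atTop (μ := μ) hmono
    have hun : (⋃ n : ℕ, {ω | x + 1/((n:ℝ)+1) < g ω}) = {ω | x < g ω} := by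
      ext ω
      simp only [Set.mem_iUnion, Set.mem_setOf_eq]
      constructor
      · rintro ⟨n, hn⟩
        have h1 : 0 < 1/((n:ℝ)+1) := by positivity
        linarith
      · intro h
        obtain ⟨n, hn⟩ := exists_nat_one_div_lt (by linarith : 0 < g ω - x)
        exact ⟨n, by linarith⟩
    rw [hun] at hseq
    have hseq' : Tendsto (fun n : ℕ => Fbar (x + 1/((n:ℝ)+1))) atTop (nhds (Fbar x)) := by
      have h := (ENNReal.tendsto_toReal (measure_ne_top μ _)).comp hseq
      have hFx : (μ {ω | x < g ω}).toReal = Fbar x := by rw [hFbar, hFg]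
      rw [hFx] at h
      apply h.congr
      intro n
      simp only [Function.comp_apply]
      rw [hFbar, hFg]
    apply le_of_tendsto hseq'
    filter_upwards with n
    have hp : (0:ℝ) < 1/((n:ℝ)+1) := by positivity
    exact hz _ (by linarith)
  exact ⟨hanti, hnn, h0, hrc⟩

end fbarbasic


/-- Assume the tail quantile function `U` of `X` is regularly varying
with index `γ ∈ (0,1/2)`, and the expectile satisfies `e_τ/q_τ → (γ⁻¹−1)^{−γ}` and
`F̄(e_τ)/(1−τ) → γ⁻¹−1` as `τ → 1⁻`, where `q_τ = U(1/(1−τ))`.  Then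
`dev_τ(X)/q_τ → β_γ = (γ⁻¹−1)^{−γ}/sqrt(1−2γ)` (first-order asymptotic expansion
of the deviatile, where `dev_τ(X)² = ((2τ−1)/(1−τ)) E[((X−e_τ)₊)²] + E[(X−e_τ)²]`). -/
theorem deviatile_first_order_expansion
    {Ω : Type*} [MeasureSpace Ω] (μ : Measure Ω) [IsProbabilityMeasure μ]
    (X : Ω → ℝ) (hXnn : ∀ ω, 0 ≤ X ω) (hX : MemLp X 2 μ)
    (Fbar : ℝ → ℝ) (hFbar : ∀ x : ℝ, Fbar x = (μ {ω | x < X ω}).toReal)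
    (γ : ℝ) (hγ : γ ∈ Ioo (0:ℝ) (1/2))
    (U : ℝ → ℝ) (hUq : ∀ t : ℝ, U t = sInf {x : ℝ | 1 / Fbar x ≥ t})
    (hU : ∀ x : ℝ, 0 < x →
      Tendsto (fun t : ℝ => U (t * x) / U t) atTop (nhds (x ^ γ)))
    (q : ℝ → ℝ) (hq : ∀ τ : ℝ, q τ = U (1 / (1 - τ)))
    (e : ℝ → ℝ)
    (he : ∀ τ ∈ Ioo (0:ℝ) 1, IsMinOn
      (fun x : ℝ => ∫ ω, (τ * (max (X ω - x) 0) ^ 2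
        + (1 - τ) * (max (-(X ω - x)) 0) ^ 2) ∂μ) univ (e τ))
    (heq : Tendsto (fun τ : ℝ => e τ / q τ) (nhdsWithin 1 (Iio 1))
      (nhds ((γ⁻¹ - 1) ^ (-γ))))
    (hFe : Tendsto (fun τ : ℝ => Fbar (e τ) / (1 - τ)) (nhdsWithin 1 (Iio 1))
      (nhds (γ⁻¹ - 1))) :
    Tendsto (fun τ : ℝ =>
        Real.sqrt ((2 * τ - 1) / (1 - τ) * (∫ ω, (max (X ω - e τ) 0) ^ 2 ∂μ)
          + ∫ ω, (X ω - e τ) ^ 2 ∂μ) / q τ)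
      (nhdsWithin 1 (Iio 1))
      (nhds ((γ⁻¹ - 1) ^ (-γ) / Real.sqrt (1 - 2 * γ))) := by
  obtain ⟨hγ0, hγ2⟩ := hγ
  obtain ⟨hanti, hnn, h0, hrc⟩ := fbar_basics μ X hX Fbar hFbar
  clear hrc
  have hneg : ∀ x : ℝ, x < 0 → Fbar x = 1 := by
    intro x hx
    rw [hFbar]
    have hall : {ω | x < X ω} = Set.univ :=
      Set.eq_univ_of_forall (fun ω => lt_of_lt_of_le hx (hXnn ω))
    rw [hall, measure_univ, ENNReal.toReal_one]
  have hU2 := hU 2 (by norm_num)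
  have hpos := fbar_pos hanti hnn hneg hUq hγ0 hU2
  have hUt := U_tendsto_atTop hanti hneg hpos h0 hUq hγ0 hU2
  have hα2 : 2 < γ⁻¹ := by
    rw [← one_div, lt_div_iff₀ hγ0]; linarith
  have hrv : ∀ y : ℝ, 1 < y →
      Tendsto (fun u : ℝ => Fbar (u * y) / Fbar u) atTop (nhds (y ^ (-γ⁻¹ : ℝ))) :=
    fun y hy => fbar_rv hanti hneg hpos h0 hUq hγ0 hU hy
  -- Potter bound
  set β : ℝ := (γ⁻¹ + 2) / 2 with hβdef
  have hβ2 : 2 < β := by rw [hβdef]; linarith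
  have hβα : β < γ⁻¹ := by rw [hβdef]; linarith
  have hβ0 : 0 < β := by linarith
  have hdbl : ∀ᶠ u : ℝ in atTop, Fbar (u * 2) ≤ 2 ^ (-β : ℝ) * Fbar u := by
    have hlt : (2:ℝ) ^ (-γ⁻¹ : ℝ) < 2 ^ (-β : ℝ) :=
      Real.rpow_lt_rpow_of_exponent_lt one_lt_two (by linarith)
    filter_upwards [(hrv 2 one_lt_two).eventually (eventually_le_nhds hlt)] with u hu
    rwa [div_le_iff₀ (hpos u)] at hu
  obtain ⟨T, hT0, hpot⟩ := potter_bound hanti hpos hβ0 hdbl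
  have hC0 : (0:ℝ) < 2 ^ (β : ℝ) := Real.rpow_pos_of_pos two_pos β
  have hkar := karamata_tail hanti hpos hα2 hrv hT0 hC0 hβ2 hpot
  set c₀ : ℝ := (γ⁻¹ - 2)⁻¹ - (γ⁻¹ - 1)⁻¹ with hc₀def
  -- ratio of tail second moment
  have hgrat : Tendsto (fun u : ℝ =>
      (∫ ω, (max (X ω - u) 0) ^ 2 ∂μ) / (u ^ 2 * Fbar u)) atTop (nhds (2 * c₀)) := by
    apply (hkar.const_mul 2).congr'
    filter_upwards [eventually_gt_atTop (0:ℝ)] with u hu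
    rw [tail_sq_eq μ X hX Fbar hFbar hu]
    have h1 : Fbar u ≠ 0 := (hpos u).ne'
    have h2 : u ≠ 0 := hu.ne'
    field_simp
    congr 1
    funext y
    ring
  have hsm := second_moment_tendsto μ X hX
  -- the τ-side filter
  set l : Filter ℝ := nhdsWithin 1 (Iio 1) with hldef
  have hIio : ∀ᶠ τ : ℝ in l, τ < 1 := eventually_mem_nhdsWithin
  have h1τ : Tendsto (fun τ : ℝ => 1 / (1 - τ)) l atTop := by
    have hsub : Tendsto (fun τ : ℝ => 1 - τ) l (nhdsWithin 0 (Set.Ioi 0)) := by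
      rw [tendsto_nhdsWithin_iff]
      constructor
      · have hcont : Tendsto (fun τ : ℝ => 1 - τ) (nhds 1) (nhds (1 - 1)) :=
          (continuous_const.sub continuous_id).tendsto 1
        rw [sub_self] at hcont
        exact hcont.mono_left nhdsWithin_le_nhds
      · filter_upwards [hIio] with τ hτ
        exact Set.mem_Ioi.mpr (by linarith)
    simp_rw [one_div]
    exact hsub.inv_tendsto_nhdsGT_zero
  have hqt : Tendsto q l atTop := by
    apply (hUt.comp h1τ).congr
    intro τ
    rw [Function.comp_apply, ← hq τ]
  have hq0 : ∀ᶠ τ : ℝ in l, 0 < q τ := hqt.eventually_gt_atTop 0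
  have hδ : (0:ℝ) < γ⁻¹ - 1 := by linarith
  set L : ℝ := (γ⁻¹ - 1) ^ (-γ : ℝ) with hLdef
  have hL0 : 0 < L := Real.rpow_pos_of_pos hδ _
  have het : Tendsto e l atTop := by
    apply (Tendsto.pos_mul_atTop hL0 heq hqt).congr'
    filter_upwards [hq0] with τ hτ
    exact div_mul_cancel₀ _ hτ.ne'
  -- composed limits
  have hA : Tendsto (fun τ : ℝ =>
      (∫ ω, (max (X ω - e τ) 0) ^ 2 ∂μ) / ((e τ) ^ 2 * Fbar (e τ))) l (nhds (2 * c₀)) :=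
    hgrat.comp het
  have hB : Tendsto (fun τ : ℝ => (∫ ω, (X ω - e τ) ^ 2 ∂μ) / (e τ) ^ 2) l (nhds 1) :=
    hsm.comp het
  have hτlin : Tendsto (fun τ : ℝ => 2 * τ - 1) l (nhds 1) := by
    have hcont : Tendsto (fun τ : ℝ => 2 * τ - 1) (nhds 1) (nhds (2 * 1 - 1)) :=
      ((continuous_const.mul continuous_id).sub continuous_const).tendsto 1
    norm_num at hcont
    exact hcont.mono_left nhdsWithin_le_nhds
  have hsum : Tendsto (fun τ : ℝ =>
      ((2 * τ - 1) * ((∫ ω, (max (X ω - e τ) 0) ^ 2 ∂μ) / ((e τ) ^ 2 * Fbar (e τ)))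
        * (Fbar (e τ) / (1 - τ))) * ((e τ / q τ) * (e τ / q τ))
      + ((∫ ω, (X ω - e τ) ^ 2 ∂μ) / (e τ) ^ 2) * ((e τ / q τ) * (e τ / q τ))) l
      (nhds ((1 * (2 * c₀) * (γ⁻¹ - 1)) * (L * L) + 1 * (L * L))) :=
    (((hτlin.mul hA).mul hFe).mul (heq.mul heq)).add (hB.mul (heq.mul heq))
  have hval : (1 * (2 * c₀) * (γ⁻¹ - 1)) * (L * L) + 1 * (L * L) = L ^ 2 / (1 - 2 * γ) := by
    rw [hc₀def]
    have h12 : (1:ℝ) - 2 * γ ≠ 0 := by intro h; nlinarith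
    have hA2 : γ⁻¹ - 2 ≠ 0 := by intro h; nlinarith
    have hA1 : γ⁻¹ - 1 ≠ 0 := hδ.ne'
    have hγne : γ ≠ 0 := hγ0.ne'
    have h5 : (1:ℝ) - γ * 2 ≠ 0 := by intro h; nlinarith
    have h6 : (1:ℝ) - γ ≠ 0 := by intro h; nlinarith
    field_simp
    ring
  rw [hval] at hsum
  have hkey : Tendsto (fun τ : ℝ =>
      ((2 * τ - 1) / (1 - τ) * (∫ ω, (max (X ω - e τ) 0) ^ 2 ∂μ)
        + ∫ ω, (X ω - e τ) ^ 2 ∂μ) / (q τ) ^ 2) l (nhds (L ^ 2 / (1 - 2 * γ))) := by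
    apply hsum.congr'
    filter_upwards [hq0, hIio, het.eventually_gt_atTop 0] with τ hqτ hτ1 heτ
    have h1 : (1:ℝ) - τ ≠ 0 := by intro h; rw [sub_eq_zero] at h; rw [← h] at hτ1; exact lt_irrefl _ hτ1
    have h2 : q τ ≠ 0 := hqτ.ne'
    have h3 : e τ ≠ 0 := heτ.ne'
    have h4 : Fbar (e τ) ≠ 0 := (hpos (e τ)).ne'
    field_simp
  -- take square roots
  have hsqrt := (Real.continuous_sqrt.tendsto _).comp hkey
  have hsval : Real.sqrt (L ^ 2 / (1 - 2 * γ)) = L / Real.sqrt (1 - 2 * γ) := by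
    rw [Real.sqrt_div (sq_nonneg L), Real.sqrt_sq hL0.le]
  rw [hsval] at hsqrt
  apply hsqrt.congr'
  filter_upwards [hq0, hIio, eventually_nhdsWithin_of_eventually_nhds
    (eventually_gt_nhds (by norm_num : (1:ℝ)/2 < 1))] with τ hqτ hτ1 hτhalf
  rw [Function.comp_apply]
  have hAnn : 0 ≤ ∫ ω, (max (X ω - e τ) 0) ^ 2 ∂μ :=
    MeasureTheory.integral_nonneg (fun ω => sq_nonneg _)
  have hBnn : 0 ≤ ∫ ω, (X ω - e τ) ^ 2 ∂μ :=
    MeasureTheory.integral_nonneg (fun ω => sq_nonneg _)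
  have hco : 0 ≤ (2 * τ - 1) / (1 - τ) := div_nonneg (by linarith) (by linarith)
  have hWnn : 0 ≤ (2 * τ - 1) / (1 - τ) * (∫ ω, (max (X ω - e τ) 0) ^ 2 ∂μ)
      + ∫ ω, (X ω - e τ) ^ 2 ∂μ := add_nonneg (mul_nonneg hco hAnn) hBnn
  rw [Real.sqrt_div hWnn, Real.sqrt_sq hqτ.le]
end
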